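/- arXiv:2402.12125 — 4 statements merged into one kernel-verified Lean document; each statement's English description precedes it below -/
import Mathlib

section
/- Let R ×_T S be a nontrivial fiber product ring with maximal ideal m. Suppose grade(mT, T) = n ≥ 0, grade(mR, R) > n and grade(mS, S) > n. Then depth(R ×_T S) = n + 1. -/
/-!
Common definitions: Betti numbers, Poincaré series, grade, depth, embedding
dimension, fiber product rings, and large homomorphisms.
-/

open CategoryTheory

universe u

/-- The length of a module, defined as the Krull dimension of its submodule
lattice (for a module annihilated by the maximal ideal of a local ring `A`,
this is its dimension as a vector space over the residue field `k = A/m_A`). -/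
noncomputable def modLength (A : Type u) [CommRing A]
    (M : Type u) [AddCommGroup M] [Module A M] : ℕ :=
  ((Order.krullDim (Submodule A M)).unbotD 0).toNat

/-- The `i`-th Betti number `β_i^A(M) = dim_k Tor_i^A(M, k)` of a module `M`
over a local ring `A` with residue field `k`. -/
noncomputable def betti (A : Type u) [CommRing A] [IsLocalRing A]
    (M : Type u) [AddCommGroup M] [Module A M] (i : ℕ) : ℕ :=
  modLength A (((Tor (ModuleCat.{u} A) i).obj (ModuleCat.of A M)).obj
      (ModuleCat.of A (IsLocalRing.ResidueField A)))

/-- The Poincaré series `P^A_M(t) = Σ_{i≥0} β_i^A(M) tⁱ`, as a formal power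
series with rational coefficients. -/
noncomputable def poincare (A : Type u) [CommRing A] [IsLocalRing A]
    (M : Type u) [AddCommGroup M] [Module A M] : PowerSeries ℚ :=
  PowerSeries.mk fun i => (betti A M i : ℚ)

/-- `grade(I, M)`: the length of the longest `M`-regular sequence contained in
the ideal `I`. -/
noncomputable def mgrade (A : Type u) [CommRing A] (I : Ideal A)
    (M : Type u) [AddCommGroup M] [Module A M] : ℕ∞ :=
  sSup {n : ℕ∞ | ∃ rs : List A, (∀ r ∈ rs, r ∈ I) ∧
    RingTheory.Sequence.IsRegular M rs ∧ n = rs.length}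

/-- `depth(A) = grade(m_A, A)` for a local ring `A`. -/
noncomputable def rdepth (A : Type u) [CommRing A] [IsLocalRing A] : ℕ∞ :=
  mgrade A (IsLocalRing.maximalIdeal A) A

/-- The embedding dimension `edim(A) = dim_k (m_A / m_A²)`. -/
noncomputable def edim (A : Type u) [CommRing A] [IsLocalRing A] : ℕ :=
  Module.finrank (IsLocalRing.ResidueField A) (IsLocalRing.CotangentSpace A)

/-- `M` has finite projective dimension: it admits a projective resolution
which vanishes in all sufficiently large degrees. -/
def HasFiniteProjDim (A : Type u) [CommRing A]
    (M : Type u) [AddCommGroup M] [Module A M] : Prop :=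
  ∃ (P : CategoryTheory.ProjectiveResolution (ModuleCat.of A M)) (n : ℕ),
    ∀ i : ℕ, n < i → CategoryTheory.Limits.IsZero (P.complex.X i)

/-- The fiber product `R ×_T S = {(r, s) : π_R r = π_S s}` as a subring of `R × S`. -/
def fiberProd {R S T : Type u} [CommRing R] [CommRing S] [CommRing T]
    (πR : R →+* T) (πS : S →+* T) : Subring (R × S) :=
  RingHom.eqLocus (πR.comp (RingHom.fst R S)) (πS.comp (RingHom.snd R S))

/-- The first natural projection `η_R : R ×_T S → R`. -/
def etaR {R S T : Type u} [CommRing R] [CommRing S] [CommRing T]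
    (πR : R →+* T) (πS : S →+* T) : ↥(fiberProd πR πS) →+* R :=
  (RingHom.fst R S).comp (fiberProd πR πS).subtype

/-- The second natural projection `η_S : R ×_T S → S`. -/
def etaS {R S T : Type u} [CommRing R] [CommRing S] [CommRing T]
    (πR : R →+* T) (πS : S →+* T) : ↥(fiberProd πR πS) →+* S :=
  (RingHom.snd R S).comp (fiberProd πR πS).subtype

/-- The extension `mR` of the maximal ideal `m` of `R ×_T S` to `R` under `η_R`. -/
noncomputable def mExtR {R S T : Type u} [CommRing R] [CommRing S] [CommRing T]
    (πR : R →+* T) (πS : S →+* T) [IsLocalRing ↥(fiberProd πR πS)] : Ideal R :=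
  Ideal.map (etaR πR πS) (IsLocalRing.maximalIdeal ↥(fiberProd πR πS))

/-- The extension `mS` of the maximal ideal `m` of `R ×_T S` to `S` under `η_S`. -/
noncomputable def mExtS {R S T : Type u} [CommRing R] [CommRing S] [CommRing T]
    (πR : R →+* T) (πS : S →+* T) [IsLocalRing ↥(fiberProd πR πS)] : Ideal S :=
  Ideal.map (etaS πR πS) (IsLocalRing.maximalIdeal ↥(fiberProd πR πS))

/-- The extension `mT` of the maximal ideal `m` of `R ×_T S` to `T` under the
natural surjection `π_R ∘ η_R`. -/
noncomputable def mExtT {R S T : Type u} [CommRing R] [CommRing S] [CommRing T]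
    (πR : R →+* T) (πS : S →+* T) [IsLocalRing ↥(fiberProd πR πS)] : Ideal T :=
  Ideal.map (πR.comp (etaR πR πS)) (IsLocalRing.maximalIdeal ↥(fiberProd πR πS))

/-- A ring homomorphism `f : A → B` between local rings is *large* if
`P^A_N(t) = P^B_N(t) · P^A_B(t)` for every finitely generated nonzero
`B`-module `N`, viewed as an `A`-module via `f`. -/
def IsLargeHom {A B : Type u} [CommRing A] [IsLocalRing A] [CommRing B] [IsLocalRing B]
    (f : A →+* B) : Prop :=
  ∀ (N : Type u) [AddCommGroup N] [Module B N], Module.Finite B N → Nontrivial N →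
    letI : Module A N := Module.compHom N f
    letI : Module A B := Module.compHom B f
    poincare A N = poincare B N * poincare A B



/-! ### Auxiliary machinery for the proof of `statement_9` -/

set_option linter.unusedSectionVars false
set_option linter.unusedVariables false

section FiberProductDepthAux

open RingTheory.Sequence Submodule IsLocalRing Pointwise

section FPpart1





variable {A : Type u} [CommRing A] {M : Type u} [AddCommGroup M] [Module A M]

lemma mem_smul_top_iff_exists' {x : A} {a : M} :
    a ∈ x • (⊤ : Submodule A M) ↔ ∃ m : M, x • m = a := by
  constructor
  · intro h
    rw [← SetLike.mem_coe, Submodule.coe_pointwise_smul] at h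
    obtain ⟨m, -, hm⟩ := h
    exact ⟨m, hm⟩
  · rintro ⟨m, rfl⟩
    exact Submodule.smul_mem_pointwise_smul m x ⊤ trivial

lemma isWeaklyRegular_take' (k : ℕ) {rs : List A} (h : IsWeaklyRegular M rs) :
    IsWeaklyRegular M (rs.take k) := by
  have := (isWeaklyRegular_append_iff M (rs.take k) (rs.drop k)).mp
    (by rw [List.take_append_drop]; exact h)
  exact this.1

lemma isRegular_take' (k : ℕ) {rs : List A} (h : IsRegular M rs) :
    IsRegular M (rs.take k) := by
  refine ⟨isWeaklyRegular_take' k h.toIsWeaklyRegular, ?_⟩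
  intro htop
  have hle : Ideal.ofList (rs.take k) • (⊤ : Submodule A M) ≤ Ideal.ofList rs • ⊤ :=
    Submodule.smul_mono_left (Ideal.span_mono (fun a ha => List.mem_of_mem_take ha))
  exact h.top_ne_smul (le_antisymm (htop.le.trans hle) le_top)

lemma le_mgrade_of_list' {I : Ideal A} {rs : List A} (hmem : ∀ r ∈ rs, r ∈ I)
    (hreg : IsRegular M rs) : (rs.length : ℕ∞) ≤ mgrade A I M :=
  le_sSup ⟨rs, hmem, hreg, rfl⟩

lemma mgrade_le_iff' {I : Ideal A} {k : ℕ} :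
    mgrade A I M ≤ (k : ℕ∞) ↔ ∀ rs : List A, (∀ r ∈ rs, r ∈ I) → IsRegular M rs →
      rs.length ≤ k := by
  constructor
  · intro h rs hmem hreg
    have := le_trans (le_mgrade_of_list' hmem hreg) h
    exact_mod_cast this
  · intro h
    refine sSup_le ?_
    rintro n ⟨rs, hmem, hreg, rfl⟩
    exact_mod_cast h rs hmem hreg

lemma exists_list_of_le_mgrade' [Nontrivial M] {I : Ideal A} {k : ℕ}
    (h : (k : ℕ∞) ≤ mgrade A I M) :
    ∃ rs : List A, (∀ r ∈ rs, r ∈ I) ∧ IsRegular M rs ∧ rs.length = k := by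
  rcases Nat.eq_zero_or_pos k with rfl | hk
  · exact ⟨[], by simp, IsRegular.nil _ _, rfl⟩
  · by_contra hcon
    have hb : mgrade A I M ≤ ((k-1 : ℕ) : ℕ∞) := by
      rw [mgrade_le_iff']
      intro rs hmem hreg
      by_contra hlen
      push_neg at hlen
      refine hcon ⟨rs.take k, ?_, isRegular_take' k hreg, ?_⟩
      · exact fun r hr => hmem r (List.mem_of_mem_take hr)
      · rw [List.length_take]
        omega
    have := le_trans h hb
    rw [Nat.cast_le] at this
    omega

lemma not_isSMulRegular_iff_exists' {x : A} :
    ¬ IsSMulRegular M x ↔ ∃ m : M, m ≠ 0 ∧ x • m = 0 := by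
  constructor
  · intro h
    rw [IsSMulRegular, Function.not_injective_iff] at h
    obtain ⟨a, b, hab, hne⟩ := h
    exact ⟨a - b, sub_ne_zero.mpr hne, by rw [smul_sub, hab, sub_self]⟩
  · rintro ⟨m, hm, hxm⟩ h
    exact hm (h (by simpa using hxm))



end FPpart1

section FPpart2
variable {A : Type u} [CommRing A] {M : Type u} [AddCommGroup M] [Module A M]

lemma ass_subset_union [IsNoetherianRing A] (N : Submodule A M) :
    associatedPrimes A M ⊆ associatedPrimes A N ∪ associatedPrimes A (M ⧸ N) := by
  rintro p hp'
  obtain ⟨hp, x, hx⟩ := isAssociatedPrime_iff.mp hp'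
  by_cases hc : ∃ a : A, a • x ∈ N ∧ a • x ≠ 0
  · left
    obtain ⟨a, haN, hane⟩ := hc
    refine isAssociatedPrime_iff.mpr ⟨hp, ⟨⟨a • x, haN⟩, ?_⟩⟩
    ext s
    rw [Submodule.mem_colon_singleton, Submodule.mem_bot]
    have hax : ∀ s : A, (s • (⟨a • x, haN⟩ : N) = 0) ↔ s • (a • x) = 0 := by
      intro s
      rw [Subtype.ext_iff]
      rfl
    rw [hax]
    constructor
    · intro hs
      have hsx : s • x = 0 := by
        have := hx ▸ hs
        rwa [Submodule.mem_colon_singleton, Submodule.mem_bot] at this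
      rw [smul_comm, hsx, smul_zero]
    · intro hs
      rw [smul_smul] at hs
      have hsa : s * a ∈ p := by
        rw [hx, Submodule.mem_colon_singleton, Submodule.mem_bot]
        exact hs
      rcases hp.mem_or_mem hsa with h | h
      · exact h
      · exfalso
        apply hane
        have := hx ▸ h
        rw [Submodule.mem_colon_singleton, Submodule.mem_bot] at this
        exact this
  · right
    push_neg at hc
    refine isAssociatedPrime_iff.mpr ⟨hp, ⟨N.mkQ x, ?_⟩⟩
    ext s
    rw [Submodule.mem_colon_singleton, Submodule.mem_bot, ← map_smul]
    rw [show N.mkQ (s • x) = Submodule.Quotient.mk (s • x) from rfl,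
      Submodule.Quotient.mk_eq_zero]
    constructor
    · intro hs
      have : s • x = 0 := by
        have := hx ▸ hs
        rwa [Submodule.mem_colon_singleton, Submodule.mem_bot] at this
      rw [this]
      exact N.zero_mem
    · intro hs
      rw [hx, Submodule.mem_colon_singleton, Submodule.mem_bot]
      exact hc s hs

theorem associatedPrimes_finite' (A : Type u) [CommRing A] (M : Type u) [AddCommGroup M]
    [Module A M] [IsNoetherianRing A] [Module.Finite A M] :
    (associatedPrimes A M).Finite := by
  suffices h : ∀ N : Submodule A M, (associatedPrimes A (M ⧸ N)).Finite by
    have h0 := h ⊥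
    rwa [LinearEquiv.AssociatedPrimes.eq (Submodule.quotEquivOfEqBot (⊥ : Submodule A M) rfl)]
      at h0
  have : IsNoetherian A M := isNoetherian_of_isNoetherianRing_of_finite A M
  intro N
  induction N using WellFoundedGT.induction with
  | _ N IH =>
  by_cases hs : Subsingleton (M ⧸ N)
  · rw [associatedPrimes.eq_empty_of_subsingleton]
    exact Set.finite_empty
  · have : Nontrivial (M ⧸ N) := not_subsingleton_iff_nontrivial.mp hs
    obtain ⟨p, hp⟩ := associatedPrimes.nonempty A (M ⧸ N)
    obtain ⟨hprime, y, hy⟩ := isAssociatedPrime_iff.mp hp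
    have hy0 : y ≠ 0 := by
      rintro rfl
      exact hprime.ne_top (by
        rw [hy, eq_top_iff]; intro r _; rw [Submodule.mem_colon_singleton, smul_zero]; exact Submodule.zero_mem _)
    set N' := Submodule.comap N.mkQ (Submodule.span A {y}) with hN'def
    have hNN' : N ≤ N' := by
      intro m hm
      rw [Submodule.mem_comap]
      have : N.mkQ m = 0 := (Submodule.Quotient.mk_eq_zero N).mpr hm
      rw [this]
      exact Submodule.zero_mem _
    have hlt : N < N' := by
      obtain ⟨x0, hx0⟩ := N.mkQ_surjective y
      refine lt_of_le_of_ne hNN' (fun he => ?_)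
      have hx0N' : x0 ∈ N' := by
        rw [Submodule.mem_comap, hx0]
        exact Submodule.mem_span_singleton_self y
      rw [← he] at hx0N'
      exact hy0 (by rw [← hx0]; exact (Submodule.Quotient.mk_eq_zero N).mpr hx0N')
    have hmap : N'.map N.mkQ = Submodule.span A {y} := by
      rw [hN'def, Submodule.map_comap_eq, Submodule.range_mkQ, top_inf_eq]
    have e2 : ((M ⧸ N) ⧸ (N'.map N.mkQ)) ≃ₗ[A] M ⧸ N' :=
      Submodule.quotientQuotientEquivQuotient N N' hNN'
    have hsub := ass_subset_union (A := A) (M := M ⧸ N) (Submodule.span A {y})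
    have hker : LinearMap.ker (LinearMap.toSpanSingleton A (M ⧸ N) y) = p := by
      ext a
      rw [LinearMap.mem_ker, LinearMap.toSpanSingleton_apply, hy,
        Submodule.mem_colon_singleton, Submodule.mem_bot]
    have e1 : (A ⧸ p) ≃ₗ[A] ↥(Submodule.span A {y}) := by
      refine (Submodule.quotEquivOfEq p _ hker.symm) ≪≫ₗ
        (LinearMap.quotKerEquivRange _) ≪≫ₗ (LinearEquiv.ofEq _ _ ?_)
      exact (LinearMap.span_singleton_eq_range A _ y).symm
    have h1 : (associatedPrimes A ↥(Submodule.span A {y})).Finite := by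
      rw [← LinearEquiv.AssociatedPrimes.eq e1,
        associatedPrimes.eq_singleton_of_isPrimary hprime.isPrimary,
        hprime.radical]
      exact Set.finite_singleton _
    have h2 : (associatedPrimes A ((M ⧸ N) ⧸ Submodule.span A {y})).Finite := by
      rw [← hmap, LinearEquiv.AssociatedPrimes.eq e2]
      exact IH N' hlt
    exact ((h1.union h2).subset hsub)

end FPpart2

section FPpart3
variable {A : Type u} [CommRing A] {M : Type u} [AddCommGroup M] [Module A M]
section Local
variable [IsLocalRing A] [IsNoetherianRing A]

lemma top_ne_smul_of_le_max' [Module.Finite A M] [Nontrivial M] {I : Ideal A}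
    (hI : I ≤ maximalIdeal A) : (⊤ : Submodule A M) ≠ I • ⊤ := by
  refine Submodule.top_ne_ideal_smul_of_le_jacobson_annihilator ?_
  have hann : Module.annihilator A M ≠ ⊤ := by
    intro h
    have h2 : (⊤ : Submodule A M).annihilator = ⊤ := by
      rw [Submodule.annihilator_top, h]
    have := Submodule.annihilator_eq_top_iff.mp h2
    exact top_ne_bot this
  rw [IsLocalRing.jacobson_eq_maximalIdeal _ hann]
  exact hI

lemma nontrivial_quotSMulTop' {x : A} (hx : x ∈ maximalIdeal A)
    [Module.Finite A M] [Nontrivial M] : Nontrivial (QuotSMulTop x M) := by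
  refine Submodule.Quotient.nontrivial_iff.mpr ?_
  rw [← Submodule.ideal_span_singleton_smul]
  exact (top_ne_smul_of_le_max' (by rwa [Ideal.span_le, Set.singleton_subset_iff])).symm

/-- If the maximal ideal consists of zerodivisors on a nonzero f.g. module,
there is a nonzero element killed by the maximal ideal. -/
lemma exists_socle_elem' [Module.Finite A M] [Nontrivial M]
    (h : ∀ z ∈ maximalIdeal A, ¬ IsSMulRegular M z) :
    ∃ u : M, u ≠ 0 ∧ ∀ z ∈ maximalIdeal A, z • u = 0 := by
  have hfin := associatedPrimes_finite' A M
  have hZD : (maximalIdeal A : Set A) ⊆ ⋃ p ∈ (↑hfin.toFinset : Set (Ideal A)), (p : Set A) := by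
    intro z hz
    have h1 : z ∈ {r : A | ∃ x : M, x ≠ 0 ∧ r • x = 0} :=
      not_isSMulRegular_iff_exists'.mp (h z hz)
    rw [← biUnion_associatedPrimes_eq_zero_divisors] at h1
    obtain ⟨p, hp1, hp2⟩ := Set.mem_iUnion₂.mp h1
    exact Set.mem_iUnion₂.mpr ⟨p, by simpa [Set.Finite.mem_toFinset] using hp1, hp2⟩
  rw [Ideal.subset_union_prime ⊤ ⊤ (fun p hp _ _ => (hfin.mem_toFinset.mp hp).isPrime)]
    at hZD
  obtain ⟨p, hps, hmp⟩ := hZD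
  have hp : IsAssociatedPrime p M := hfin.mem_toFinset.mp hps
  have hpm : p = maximalIdeal A := le_antisymm (le_maximalIdeal hp.isPrime.ne_top) hmp
  obtain ⟨hprime, u, hu⟩ := isAssociatedPrime_iff.mp hp
  refine ⟨u, ?_, ?_⟩
  · rintro rfl
    exact hprime.ne_top
      (by rw [hu, eq_top_iff]; intro r _; rw [Submodule.mem_colon_singleton, smul_zero]; exact Submodule.zero_mem _)
  · intro z hz
    have hzp : z ∈ p := hpm ▸ hz
    rw [hu, Submodule.mem_colon_singleton, Submodule.mem_bot] at hzp
    exact hzp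

/-- Prime avoidance: a common regular element for two modules. -/
lemma exists_smul_regular_pair' (M N : Type u) [AddCommGroup M] [Module A M]
    [AddCommGroup N] [Module A N] [Module.Finite A M] [Module.Finite A N]
    (hM : ∃ x ∈ maximalIdeal A, IsSMulRegular M x)
    (hN : ∃ x ∈ maximalIdeal A, IsSMulRegular N x) :
    ∃ x ∈ maximalIdeal A, IsSMulRegular M x ∧ IsSMulRegular N x := by
  obtain ⟨xM, hxM, hregM⟩ := hM
  obtain ⟨xN, hxN, hregN⟩ := hN
  have hfinM := associatedPrimes_finite' A M
  have hfinN := associatedPrimes_finite' A N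
  set s : Finset (Ideal A) := (hfinM.union hfinN).toFinset with hs
  have hnosub : ¬ ∃ p ∈ s, maximalIdeal A ≤ p := by
    rintro ⟨p, hps, hle⟩
    rw [hs, Set.Finite.mem_toFinset] at hps
    rcases hps with hp | hp
    · obtain ⟨hprime, u, hu⟩ := (isAssociatedPrime_iff (I := p) (M := M)).mp hp
      have hu0 : u ≠ 0 := by
        rintro rfl
        exact hprime.ne_top
          (by rw [hu, eq_top_iff]; intro r _; rw [Submodule.mem_colon_singleton, smul_zero]; exact Submodule.zero_mem _)
      have : xM • u = 0 := by
        have : xM ∈ p := hle hxM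
        rwa [hu, Submodule.mem_colon_singleton, Submodule.mem_bot] at this
      exact hu0 (hregM (by simpa using this))
    · obtain ⟨hprime, u, hu⟩ := (isAssociatedPrime_iff (I := p) (M := N)).mp hp
      have hu0 : u ≠ 0 := by
        rintro rfl
        exact hprime.ne_top
          (by rw [hu, eq_top_iff]; intro r _; rw [Submodule.mem_colon_singleton, smul_zero]; exact Submodule.zero_mem _)
      have : xN • u = 0 := by
        have : xN ∈ p := hle hxN
        rwa [hu, Submodule.mem_colon_singleton, Submodule.mem_bot] at this
      exact hu0 (hregN (by simpa using this))
  have hprimes : ∀ p ∈ s, p ≠ ⊤ → p ≠ ⊤ → Ideal.IsPrime p := by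
    intro p hp _ _
    rw [hs, Set.Finite.mem_toFinset] at hp
    rcases hp with hp | hp
    · exact hp.isPrime
    · exact hp.isPrime
  have hnotsub : ¬ ((maximalIdeal A : Set A) ⊆ ⋃ p ∈ (↑s : Set (Ideal A)), (p : Set A)) := by
    rw [Ideal.subset_union_prime ⊤ ⊤ hprimes]
    exact hnosub
  rw [Set.not_subset] at hnotsub
  obtain ⟨x, hx, hxnot⟩ := hnotsub
  refine ⟨x, hx, ?_, ?_⟩
  · by_contra hreg
    obtain ⟨u, hu0, hu⟩ := not_isSMulRegular_iff_exists'.mp hreg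
    have : x ∈ ⋃ p ∈ associatedPrimes A M, (p : Set A) := by
      rw [biUnion_associatedPrimes_eq_zero_divisors]
      exact ⟨u, hu0, hu⟩
    obtain ⟨p, hp1, hp2⟩ := Set.mem_iUnion₂.mp this
    refine hxnot (Set.mem_iUnion₂.mpr ⟨p, ?_, hp2⟩)
    rw [hs, Finset.mem_coe, Set.Finite.mem_toFinset]
    exact Or.inl hp1
  · by_contra hreg
    obtain ⟨u, hu0, hu⟩ := not_isSMulRegular_iff_exists'.mp hreg
    have : x ∈ ⋃ p ∈ associatedPrimes A N, (p : Set A) := by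
      rw [biUnion_associatedPrimes_eq_zero_divisors]
      exact ⟨u, hu0, hu⟩
    obtain ⟨p, hp1, hp2⟩ := Set.mem_iUnion₂.mp this
    refine hxnot (Set.mem_iUnion₂.mpr ⟨p, ?_, hp2⟩)
    rw [hs, Finset.mem_coe, Set.Finite.mem_toFinset]
    exact Or.inr hp1

end Local


end FPpart3

section FPpart4
variable {A : Type u} [CommRing A]

section Comm
variable (M : Type u) [AddCommGroup M] [Module A M]

/-- Commuting two quotient operations. -/
noncomputable def quotSMulTopComm (x z : A) :
    QuotSMulTop x (QuotSMulTop z M) ≃ₗ[A] QuotSMulTop z (QuotSMulTop x M) := by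
  have e1 : ∀ (a b : A), (M ⧸ (Ideal.ofList [a, b] • ⊤ : Submodule A M)) ≃ₗ[A]
      QuotSMulTop b (QuotSMulTop a M) := by
    intro a b
    refine (Submodule.quotOfListConsSMulTopEquivQuotSMulTopInner M a [b]) ≪≫ₗ
      (Submodule.quotEquivOfEq _ _ ?_)
    rw [Ideal.ofList_singleton, Submodule.ideal_span_singleton_smul]
  have heq : (Ideal.ofList [z, x] : Ideal A) = Ideal.ofList [x, z] := by
    simp only [Ideal.ofList_cons, Ideal.ofList_nil, sup_bot_eq]
    exact sup_comm _ _
  exact (e1 z x).symm ≪≫ₗ (Submodule.quotEquivOfEq _ _ (by rw [heq])) ≪≫ₗ (e1 x z)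

end Comm

section Exchange
variable [IsLocalRing A] [IsNoetherianRing A]

/-- Positivity of depth of `M/xM` when `M` has a regular sequence of length 2 in the
maximal ideal. -/
lemma exists_regular_on_quot' {M : Type u} [AddCommGroup M] [Module A M] [Module.Finite A M]
    {x : A} (hx : x ∈ maximalIdeal A) (hxreg : IsSMulRegular M x)
    {y1 y2 : A} (h1 : y1 ∈ maximalIdeal A) (h2 : y2 ∈ maximalIdeal A)
    (hy : IsRegular M [y1, y2]) : ∃ z ∈ maximalIdeal A, IsSMulRegular (QuotSMulTop x M) z := by
  have hM : Nontrivial M := hy.nontrivial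
  have hQ : Nontrivial (QuotSMulTop x M) := nontrivial_quotSMulTop' hx
  obtain ⟨hy1reg, hyq⟩ := (isRegular_cons_iff M y1 [y2]).mp hy
  have hy2reg : IsSMulRegular (QuotSMulTop y1 M) y2 :=
    ((isRegular_cons_iff _ y2 []).mp hyq).1
  by_contra hcon
  push_neg at hcon
  obtain ⟨u, hu0, hu⟩ := exists_socle_elem' (M := QuotSMulTop x M) hcon
  obtain ⟨w, rfl⟩ := Submodule.Quotient.mk_surjective _ u
  have hwn : w ∉ x • (⊤ : Submodule A M) := fun hw =>
    hu0 ((Submodule.Quotient.mk_eq_zero _).mpr hw)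
  have hmem : ∀ a ∈ maximalIdeal A, ∃ m : M, x • m = a • w := by
    intro a ha
    have := hu a ha
    rw [← Submodule.Quotient.mk_smul, Submodule.Quotient.mk_eq_zero] at this
    exact mem_smul_top_iff_exists'.mp this
  obtain ⟨v, hv⟩ := hmem y1 h1
  obtain ⟨uy, huy⟩ := hmem y2 h2
  -- y1 • uy = y2 • v
  have key : y1 • uy = y2 • v := by
    apply hxreg
    show x • (y1 • uy) = x • (y2 • v)
    rw [smul_comm x y1, huy, smul_comm y1 y2, smul_comm x y2, hv]
  -- so y2 • v ∈ y1 • ⊤, hence v ∈ y1 • ⊤ by regularity of y2 on M/y1M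
  have hvmem : v ∈ y1 • (⊤ : Submodule A M) := by
    have hz : y2 • (Submodule.Quotient.mk v : QuotSMulTop y1 M) = 0 := by
      rw [← Submodule.Quotient.mk_smul, Submodule.Quotient.mk_eq_zero, ← key]
      exact mem_smul_top_iff_exists'.mpr ⟨uy, rfl⟩
    have h0 : y2 • (Submodule.Quotient.mk v : QuotSMulTop y1 M) = y2 • 0 := by
      rw [hz, smul_zero]
    have := hy2reg h0
    rwa [← Submodule.Quotient.mk_eq_zero]
  obtain ⟨v', hv'⟩ := mem_smul_top_iff_exists'.mp hvmem
  apply hwn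
  refine mem_smul_top_iff_exists'.mpr ⟨v', ?_⟩
  apply hy1reg
  show y1 • (x • v') = y1 • w
  rw [smul_comm y1 x, hv', hv]

/-- The exchange' lemma: if `x ∈ 𝔪` is `M`-regular and there is an `M`-regular sequence of
length `k` in `𝔪`, then `QuotSMulTop x M` has a regular sequence of length `k - 1` in `𝔪`. -/
lemma exchange' (k : ℕ) :
    ∀ (M : Type u) [AddCommGroup M] [Module A M], ∀ [Module.Finite A M],
    ∀ {x : A}, x ∈ maximalIdeal A → IsSMulRegular M x →
    ∀ {rs : List A}, (∀ r ∈ rs, r ∈ maximalIdeal A) → IsRegular M rs → rs.length = k →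
    ∃ ts : List A, (∀ t ∈ ts, t ∈ maximalIdeal A) ∧
      IsRegular (QuotSMulTop x M) ts ∧ ts.length = k - 1 := by
  induction k with
  | zero =>
    intro M _ _ _ x hx hxreg rs hmem hreg hlen
    haveI : Nontrivial M := hreg.nontrivial
    haveI : Nontrivial (QuotSMulTop x M) := nontrivial_quotSMulTop' hx
    exact ⟨[], by simp, IsRegular.nil _ _, rfl⟩
  | succ k IH =>
    intro M _ _ _ x hx hxreg rs hmem hreg hlen
    haveI hM : Nontrivial M := hreg.nontrivial
    haveI hQx : Nontrivial (QuotSMulTop x M) := nontrivial_quotSMulTop' hx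
    rcases k with _ | k
    · exact ⟨[], by simp, IsRegular.nil _ _, rfl⟩
    -- now rs has length k + 2 ≥ 2
    · have hne : rs ≠ [] := by rintro rfl; simp at hlen
      set dl := rs.dropLast with hdl
      set wlast := rs.getLast hne with hwlast
      have hsplit : dl ++ [wlast] = rs := List.dropLast_append_getLast hne
      have hdllen : dl.length = k + 1 := by
        rw [hdl, List.length_dropLast, hlen]; omega
      -- dl is regular and wlast is regular on M / (dl)
      have hw : IsWeaklyRegular M dl ∧ IsWeaklyRegular
          (M ⧸ (Ideal.ofList dl • ⊤ : Submodule A M)) [wlast] := by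
        rw [← isWeaklyRegular_append_iff, hsplit]
        exact hreg.toIsWeaklyRegular
      have hdlmem : ∀ r ∈ dl, r ∈ maximalIdeal A := fun r hr =>
        hmem r (List.dropLast_subset rs hr)
      have hwlastmem : wlast ∈ maximalIdeal A := hmem _ (List.getLast_mem hne)
      have hdlreg : IsRegular M dl :=
        (IsLocalRing.isRegular_iff_isWeaklyRegular_of_subset_maximalIdeal hdlmem).mpr hw.1
      have hwlastreg : IsSMulRegular (M ⧸ (Ideal.ofList dl • ⊤ : Submodule A M)) wlast :=
        (isWeaklyRegular_singleton_iff _ _).mp hw.2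
      -- a regular element on QuotSMulTop x M exists, via the 2-prefix of rs
      have hpos : ∃ z ∈ maximalIdeal A, IsSMulRegular (QuotSMulTop x M) z := by
        obtain ⟨y1, rest, rfl⟩ : ∃ y1 rest, rs = y1 :: rest := by
          cases rs with
          | nil => exact absurd rfl hne
          | cons a l => exact ⟨a, l, rfl⟩
        obtain ⟨y2, rest', rfl⟩ : ∃ y2 rest', rest = y2 :: rest' := by
          cases rest with
          | nil => simp at hlen
          | cons a l => exact ⟨a, l, rfl⟩
        have h2 := isRegular_take' 2 hreg
        simp only [List.take] at h2
        exact exists_regular_on_quot' hx hxreg (hmem y1 (by simp)) (hmem y2 (by simp)) h2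
      -- simultaneous regular element
      have hquotfin : Module.Finite A (M ⧸ (Ideal.ofList dl • ⊤ : Submodule A M)) :=
        Module.Finite.quotient A _
      obtain ⟨z, hz, hzQx, hzdl⟩ := exists_smul_regular_pair' (QuotSMulTop x M)
        (M ⧸ (Ideal.ofList dl • ⊤ : Submodule A M)) hpos ⟨wlast, hwlastmem, hwlastreg⟩
      -- dl ++ [z] is regular on M
      have hdlz : IsRegular M (dl ++ [z]) := by
        refine (IsLocalRing.isRegular_iff_isWeaklyRegular_of_subset_maximalIdeal ?_).mpr ?_
        · intro r hr
          rcases List.mem_append.mp hr with h | h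
          · exact hdlmem r h
          · simp at h; subst h; exact hz
        · rw [isWeaklyRegular_append_iff]
          exact ⟨hw.1, (isWeaklyRegular_singleton_iff _ _).mpr hzdl⟩
      -- permute to z :: dl
      have hzdl' : IsRegular M (z :: dl) :=
        IsLocalRing.isRegular_of_perm hdlz (List.perm_append_singleton z dl)
      obtain ⟨hzM, hdlQz⟩ := (isRegular_cons_iff M z dl).mp hzdl'
      -- x is regular on QuotSMulTop z M
      have hxz : IsRegular M [x, z] := by
        rw [isRegular_cons_iff]
        refine ⟨hxreg, ?_⟩
        rw [isRegular_cons_iff]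
        refine ⟨hzQx, ?_⟩
        have : Nontrivial (QuotSMulTop z (QuotSMulTop x M)) := nontrivial_quotSMulTop' hz
        exact IsRegular.nil _ _
      have hzx : IsRegular M [z, x] :=
        IsLocalRing.isRegular_of_perm hxz (by constructor)
      have hxQz : IsSMulRegular (QuotSMulTop z M) x :=
        ((isRegular_cons_iff _ x []).mp ((isRegular_cons_iff M z [x]).mp hzx).2).1
      -- apply induction hypothesis on QuotSMulTop z M with sequence dl
      obtain ⟨ts', hts'mem, hts'reg, hts'len⟩ :=
        IH (QuotSMulTop z M) hx hxQz hdlmem hdlQz hdllen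
      -- transport along the commutation isomorphism
      have hts'reg2 : IsRegular (QuotSMulTop z (QuotSMulTop x M)) ts' :=
        ((quotSMulTopComm M x z).isRegular_congr ts').mp hts'reg
      refine ⟨z :: ts', ?_, ?_, ?_⟩
      · intro t ht
        rcases List.mem_cons.mp ht with h | h
        · subst h; exact hz
        · exact hts'mem t h
      · rw [isRegular_cons_iff]
        exact ⟨hzQx, hts'reg2⟩
      · simp [hts'len]

end Exchange

end FPpart4

section FPpart5
variable {A : Type u} [CommRing A]

section DepthHelpers
variable [IsLocalRing A] [IsNoetherianRing A]
variable {M : Type u} [AddCommGroup M] [Module A M]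

lemma exists_reg_of_one_le' [Nontrivial M]
    (h : ((1 : ℕ) : ℕ∞) ≤ mgrade A (maximalIdeal A) M) :
    ∃ x ∈ maximalIdeal A, IsSMulRegular M x := by
  obtain ⟨rs, hmem, hreg, hlen⟩ := exists_list_of_le_mgrade' h
  obtain ⟨a, rfl⟩ := List.length_eq_one_iff.mp hlen
  exact ⟨a, hmem a (by simp), ((isRegular_cons_iff _ _ _).mp hreg).1⟩

lemma mgrade_quot_of_le' [Module.Finite A M] [Nontrivial M] {x : A}
    (hx : x ∈ maximalIdeal A) (hxreg : IsSMulRegular M x) {k : ℕ}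
    (h : ((k + 1 : ℕ) : ℕ∞) ≤ mgrade A (maximalIdeal A) M) :
    ((k : ℕ) : ℕ∞) ≤ mgrade A (maximalIdeal A) (QuotSMulTop x M) := by
  obtain ⟨rs, hmem, hreg, hlen⟩ := exists_list_of_le_mgrade' h
  obtain ⟨ts, htsmem, htsreg, htslen⟩ := exchange' (k+1) M hx hxreg hmem hreg hlen
  have := le_mgrade_of_list' htsmem htsreg
  rwa [htslen, Nat.add_sub_cancel] at this

lemma mgrade_cons_le' [Module.Finite A M] [Nontrivial M] {x : A}
    (hx : x ∈ maximalIdeal A) (hxreg : IsSMulRegular M x) {k : ℕ}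
    (h : ((k : ℕ) : ℕ∞) ≤ mgrade A (maximalIdeal A) (QuotSMulTop x M)) :
    ((k + 1 : ℕ) : ℕ∞) ≤ mgrade A (maximalIdeal A) M := by
  haveI : Nontrivial (QuotSMulTop x M) := nontrivial_quotSMulTop' hx
  obtain ⟨rs, hmem, hreg, hlen⟩ := exists_list_of_le_mgrade' h
  have hcons : IsRegular M (x :: rs) := (isRegular_cons_iff _ _ _).mpr ⟨hxreg, hreg⟩
  have hmem' : ∀ r ∈ x :: rs, r ∈ maximalIdeal A := by
    intro r hr
    rcases List.mem_cons.mp hr with h | h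
    · subst h; exact hx
    · exact hmem r h
  have := le_mgrade_of_list' hmem' hcons
  rwa [List.length_cons, hlen] at this

lemma smul_regular_of_injective' {L : Type u} [AddCommGroup L] [Module A L]
    (g : L →ₗ[A] M) (hg : Function.Injective g) {x : A} (hxM : IsSMulRegular M x) :
    IsSMulRegular L x := by
  intro a b hab
  apply hg
  apply hxM
  show x • g a = x • g b
  rw [← map_smul, ← map_smul]
  exact congrArg g hab

lemma quot_map_injective' {L N : Type u} [AddCommGroup L] [Module A L]
    [AddCommGroup N] [Module A N]
    {g : L →ₗ[A] M} {f : M →ₗ[A] N} (hg : Function.Injective g)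
    (hex : Function.Exact g f) {x : A} (hxN : IsSMulRegular N x) :
    Function.Injective (QuotSMulTop.map x g) := by
  have key : ∀ l : L, (QuotSMulTop.map x g) (Submodule.Quotient.mk l) = 0 →
      (Submodule.Quotient.mk l : QuotSMulTop x L) = 0 := by
    intro l hl
    rw [QuotSMulTop.map_apply_mk, Submodule.Quotient.mk_eq_zero] at hl
    obtain ⟨m, hm⟩ := mem_smul_top_iff_exists'.mp hl
    have hfm : f m = 0 := by
      apply hxN
      show x • f m = x • 0
      rw [smul_zero, ← map_smul, hm, hex.apply_apply_eq_zero]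
    obtain ⟨l', hl'⟩ := (hex m).mp hfm
    have : g (x • l') = g l := by rw [map_smul, hl', hm]
    rw [Submodule.Quotient.mk_eq_zero]
    exact mem_smul_top_iff_exists'.mpr ⟨l', hg this⟩
  intro a b hab
  obtain ⟨la, rfl⟩ := Submodule.Quotient.mk_surjective _ a
  obtain ⟨lb, rfl⟩ := Submodule.Quotient.mk_surjective _ b
  have h0 : (Submodule.Quotient.mk (la - lb) : QuotSMulTop x L) = 0 := by
    apply key
    have : (Submodule.Quotient.mk (la - lb) : QuotSMulTop x L) =
        Submodule.Quotient.mk la - Submodule.Quotient.mk lb := by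
      rw [Submodule.Quotient.mk_sub]
    rw [this, map_sub, hab, sub_self]
  rw [show (Submodule.Quotient.mk (la - lb) : QuotSMulTop x L) =
      Submodule.Quotient.mk la - Submodule.Quotient.mk lb from
      Submodule.Quotient.mk_sub _, sub_eq_zero] at h0
  exact h0

end DepthHelpers

section MainDepth
variable [IsLocalRing A] [IsNoetherianRing A]

/-- Lower bound: in a SES `0 → L → M → N → 0`, if `grade N ≥ n` and `grade M ≥ n+1`
then `grade L ≥ n+1`. -/
theorem depth_lower' (n : ℕ) :
    ∀ (L M N : Type u) [AddCommGroup L] [Module A L] [AddCommGroup M] [Module A M]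
    [AddCommGroup N] [Module A N], ∀ [Module.Finite A L] [Module.Finite A M]
    [Module.Finite A N], ∀ [Nontrivial L] [Nontrivial M] [Nontrivial N],
    ∀ (g : L →ₗ[A] M) (f : M →ₗ[A] N), Function.Injective g → Function.Surjective f →
    Function.Exact g f →
    ((n : ℕ) : ℕ∞) ≤ mgrade A (maximalIdeal A) N →
    ((n + 1 : ℕ) : ℕ∞) ≤ mgrade A (maximalIdeal A) M →
    ((n + 1 : ℕ) : ℕ∞) ≤ mgrade A (maximalIdeal A) L := by
  induction n with
  | zero =>
    intro L M N _ _ _ _ _ _ _ _ _ _ _ _ g f hg hf hex hN hM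
    obtain ⟨x, hx, hxM⟩ := exists_reg_of_one_le' hM
    have hxL : IsSMulRegular L x := smul_regular_of_injective' g hg hxM
    have : ((0 : ℕ) : ℕ∞) ≤ mgrade A (maximalIdeal A) (QuotSMulTop x L) := by
      simp
    exact mgrade_cons_le' hx hxL this
  | succ n IH =>
    intro L M N _ _ _ _ _ _ _ _ _ _ _ _ g f hg hf hex hN hM
    -- find x regular on both M and N
    have hexN : ∃ x ∈ maximalIdeal A, IsSMulRegular N x := by
      refine exists_reg_of_one_le' (le_trans ?_ hN)
      exact_mod_cast Nat.one_le_iff_ne_zero.mpr (Nat.succ_ne_zero n)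
    have hexM : ∃ x ∈ maximalIdeal A, IsSMulRegular M x := by
      refine exists_reg_of_one_le' (le_trans ?_ hM)
      exact_mod_cast Nat.le_add_left 1 (n+1)
    obtain ⟨x, hx, hxM, hxN⟩ := exists_smul_regular_pair' M N hexM hexN
    have hxL : IsSMulRegular L x := smul_regular_of_injective' g hg hxM
    -- quotient the SES
    haveI : Nontrivial (QuotSMulTop x L) := nontrivial_quotSMulTop' hx
    haveI : Nontrivial (QuotSMulTop x M) := nontrivial_quotSMulTop' hx
    haveI : Nontrivial (QuotSMulTop x N) := nontrivial_quotSMulTop' hx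
    have hg' : Function.Injective (QuotSMulTop.map x g) := quot_map_injective' hg hex hxN
    have hf' : Function.Surjective (QuotSMulTop.map x f) := QuotSMulTop.map_surjective x hf
    have hex' : Function.Exact (QuotSMulTop.map x g) (QuotSMulTop.map x f) :=
      QuotSMulTop.map_exact x hex hf
    have hN' : ((n : ℕ) : ℕ∞) ≤ mgrade A (maximalIdeal A) (QuotSMulTop x N) :=
      mgrade_quot_of_le' hx hxN hN
    have hM' : ((n + 1 : ℕ) : ℕ∞) ≤ mgrade A (maximalIdeal A) (QuotSMulTop x M) :=
      mgrade_quot_of_le' hx hxM hM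
    have hL' := IH (QuotSMulTop x L) (QuotSMulTop x M) (QuotSMulTop x N)
      (QuotSMulTop.map x g) (QuotSMulTop.map x f) hg' hf' hex' hN' hM'
    exact mgrade_cons_le' hx hxL hL'

/-- Upper bound: in a SES `0 → L → M → N → 0`, if `grade N = n` and `grade M ≥ n+1`
then `grade L ≤ n+1`. -/
theorem depth_upper' (n : ℕ) :
    ∀ (L M N : Type u) [AddCommGroup L] [Module A L] [AddCommGroup M] [Module A M]
    [AddCommGroup N] [Module A N], ∀ [Module.Finite A L] [Module.Finite A M]
    [Module.Finite A N], ∀ [Nontrivial L] [Nontrivial M] [Nontrivial N],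
    ∀ (g : L →ₗ[A] M) (f : M →ₗ[A] N), Function.Injective g → Function.Surjective f →
    Function.Exact g f →
    mgrade A (maximalIdeal A) N = ((n : ℕ) : ℕ∞) →
    ((n + 1 : ℕ) : ℕ∞) ≤ mgrade A (maximalIdeal A) M →
    mgrade A (maximalIdeal A) L ≤ ((n + 1 : ℕ) : ℕ∞) := by
  induction n with
  | zero =>
    intro L M N _ _ _ _ _ _ _ _ _ _ _ _ g f hg hf hex hN hM
    -- socle element of N
    have hnoreg : ∀ z ∈ maximalIdeal A, ¬ IsSMulRegular N z := by
      intro z hz hreg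
      have h1 : ((1 : ℕ) : ℕ∞) ≤ mgrade A (maximalIdeal A) N := by
        have : IsRegular N [z] := by
          rw [isRegular_cons_iff]
          refine ⟨hreg, ?_⟩
          haveI : Nontrivial (QuotSMulTop z N) := nontrivial_quotSMulTop' hz
          exact IsRegular.nil _ _
        have := le_mgrade_of_list' (rs := [z])
          (by intro r hr; rw [List.mem_singleton] at hr; subst hr; exact hz) this
        simpa using this
      rw [hN] at h1
      simp at h1
    obtain ⟨u, hu0, hu⟩ := exists_socle_elem' hnoreg
    obtain ⟨v, rfl⟩ := hf u
    rw [mgrade_le_iff']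
    intro rs hmem hreg
    by_contra hlen
    push_neg at hlen
    -- take the first two elements
    have h2 : IsRegular L (rs.take 2) := isRegular_take' 2 hreg
    obtain ⟨x, y, hxy⟩ : ∃ x y, rs.take 2 = [x, y] := by
      rcases rs with _ | ⟨a, _ | ⟨b, l⟩⟩
      · simp at hlen
      · simp at hlen
      · exact ⟨a, b, rfl⟩
    rw [hxy] at h2
    have hxm : x ∈ maximalIdeal A := hmem x (by
      have := List.mem_of_mem_take (by rw [hxy]; simp : x ∈ rs.take 2); exact this)
    have hym : y ∈ maximalIdeal A := hmem y (by
      have := List.mem_of_mem_take (by rw [hxy]; simp : y ∈ rs.take 2); exact this)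
    obtain ⟨hxL, hyq⟩ := (isRegular_cons_iff _ _ _).mp h2
    have hyQ : IsSMulRegular (QuotSMulTop x L) y := ((isRegular_cons_iff _ _ _).mp hyq).1
    -- the lifting function
    have hlift : ∀ z ∈ maximalIdeal A, ∃ l : L, g l = z • (v : M) := by
      intro z hz
      have : f (z • v) = 0 := by rw [map_smul, hu z hz]
      obtain ⟨l, hl⟩ := (hex (z • v)).mp this
      exact ⟨l, hl⟩
    obtain ⟨lx, hlx⟩ := hlift x hxm
    obtain ⟨ly, hly⟩ := hlift y hym
    have hxy2 : x • ly = y • lx := by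
      apply hg
      rw [map_smul, map_smul, hlx, hly, smul_comm]
    -- lx ∈ x • ⊤
    have hlxmem : lx ∈ x • (⊤ : Submodule A L) := by
      have h0 : y • (Submodule.Quotient.mk lx : QuotSMulTop x L) = 0 := by
        rw [← Submodule.Quotient.mk_smul, ← hxy2, Submodule.Quotient.mk_eq_zero]
        exact mem_smul_top_iff_exists'.mpr ⟨ly, rfl⟩
      have h1 : y • (Submodule.Quotient.mk lx : QuotSMulTop x L) = y • 0 := by
        rw [h0, smul_zero]
      have := hyQ h1
      rwa [← Submodule.Quotient.mk_eq_zero]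
    obtain ⟨w, hw⟩ := mem_smul_top_iff_exists'.mp hlxmem
    -- all lifts are z • w
    have hkey : ∀ z ∈ maximalIdeal A, z • v = z • g w := by
      intro z hz
      obtain ⟨lz, hlz⟩ := hlift z hz
      have h1 : x • lz = z • lx := by
        apply hg
        rw [map_smul, map_smul, hlx, hlz, smul_comm]
      have h2' : lz = z • w := by
        apply hxL
        show x • lz = x • (z • w)
        rw [h1, ← hw, smul_comm z x]
      rw [← hlz, h2', map_smul]
    -- get a contradiction
    obtain ⟨x0, hx0, hx0M⟩ := exists_reg_of_one_le' hM
    have : v = g w := by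
      apply hx0M
      show x0 • v = x0 • g w
      exact hkey x0 hx0
    apply hu0
    rw [this, hex.apply_apply_eq_zero]
  | succ n IH =>
    intro L M N _ _ _ _ _ _ _ _ _ _ _ _ g f hg hf hex hN hM
    by_contra hcon
    push_neg at hcon
    have hL : ((n + 3 : ℕ) : ℕ∞) ≤ mgrade A (maximalIdeal A) L := by
      have h1 : ((n + 2 : ℕ) : ℕ∞) < mgrade A (maximalIdeal A) L := by
        exact_mod_cast hcon
      have := Order.add_one_le_of_lt h1
      refine le_trans (le_of_eq ?_) this
      push_cast
      ring
    -- pick x regular on M and N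
    have hexN : ∃ x ∈ maximalIdeal A, IsSMulRegular N x := by
      refine exists_reg_of_one_le' (le_trans ?_ hN.ge)
      exact_mod_cast Nat.one_le_iff_ne_zero.mpr (Nat.succ_ne_zero n)
    have hexM : ∃ x ∈ maximalIdeal A, IsSMulRegular M x := by
      refine exists_reg_of_one_le' (le_trans ?_ hM)
      exact_mod_cast Nat.le_add_left 1 (n+1)
    obtain ⟨x, hx, hxM, hxN⟩ := exists_smul_regular_pair' M N hexM hexN
    have hxL : IsSMulRegular L x := smul_regular_of_injective' g hg hxM
    haveI : Nontrivial (QuotSMulTop x L) := nontrivial_quotSMulTop' hx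
    haveI : Nontrivial (QuotSMulTop x M) := nontrivial_quotSMulTop' hx
    haveI : Nontrivial (QuotSMulTop x N) := nontrivial_quotSMulTop' hx
    have hg' : Function.Injective (QuotSMulTop.map x g) := quot_map_injective' hg hex hxN
    have hf' : Function.Surjective (QuotSMulTop.map x f) := QuotSMulTop.map_surjective x hf
    have hex' : Function.Exact (QuotSMulTop.map x g) (QuotSMulTop.map x f) :=
      QuotSMulTop.map_exact x hex hf
    -- grade of N/xN equals n
    have hNq : mgrade A (maximalIdeal A) (QuotSMulTop x N) = ((n : ℕ) : ℕ∞) := by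
      refine le_antisymm ?_ (mgrade_quot_of_le' hx hxN hN.ge)
      by_contra hq
      push_neg at hq
      have h1 : ((n + 1 : ℕ) : ℕ∞) ≤ mgrade A (maximalIdeal A) (QuotSMulTop x N) := by
        have := Order.add_one_le_of_lt hq
        refine le_trans (le_of_eq ?_) this
        push_cast
        ring
      have h2 := mgrade_cons_le' hx hxN h1
      rw [hN] at h2
      exact_mod_cast (by omega : ¬ (n + 1 + 1 ≤ n + 1)) (by exact_mod_cast h2)
    have hMq : ((n + 1 : ℕ) : ℕ∞) ≤ mgrade A (maximalIdeal A) (QuotSMulTop x M) :=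
      mgrade_quot_of_le' hx hxM hM
    have hLq : ((n + 2 : ℕ) : ℕ∞) ≤ mgrade A (maximalIdeal A) (QuotSMulTop x L) :=
      mgrade_quot_of_le' hx hxL hL
    have := IH (QuotSMulTop x L) (QuotSMulTop x M) (QuotSMulTop x N)
      (QuotSMulTop.map x g) (QuotSMulTop.map x f) hg' hf' hex' hNq hMq
    have hfinal := le_trans hLq this
    exact_mod_cast (by omega : ¬ (n + 2 ≤ n + 1)) (by exact_mod_cast hfinal)

end MainDepth

end FPpart5

section FPpart6
section Transfer
variable {A B : Type u} [CommRing A] [CommRing B]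

lemma mgrade_congr' {A : Type u} [CommRing A] {M M' : Type u} [AddCommGroup M] [Module A M]
    [AddCommGroup M'] [Module A M'] (e : M ≃ₗ[A] M') (I : Ideal A) :
    mgrade A I M = mgrade A I M' := by
  unfold mgrade
  congr 1
  ext n
  constructor
  · rintro ⟨rs, hmem, hreg, rfl⟩
    exact ⟨rs, hmem, (e.isRegular_congr rs).mp hreg, rfl⟩
  · rintro ⟨rs, hmem, hreg, rfl⟩
    exact ⟨rs, hmem, (e.isRegular_congr rs).mpr hreg, rfl⟩

lemma exists_preimage_list' (φ : A →+* B) (hφ : Function.Surjective φ) (I : Ideal A) :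
    ∀ bs : List B, (∀ b ∈ bs, b ∈ I.map φ) →
      ∃ as : List A, (∀ a ∈ as, a ∈ I) ∧ as.map φ = bs := by
  intro bs
  induction bs with
  | nil => exact fun _ => ⟨[], by simp, rfl⟩
  | cons b bs IH =>
    intro h
    obtain ⟨a, ha, hab⟩ := (Ideal.mem_map_iff_of_surjective φ hφ).mp (h b (by simp))
    obtain ⟨as, hmem, hmap⟩ := IH (fun c hc => h c (by simp [hc]))
    exact ⟨a :: as, by
      intro c hc
      rcases List.mem_cons.mp hc with h' | h'
      · subst h'; exact ha
      · exact hmem c h', by simp [hab, hmap]⟩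

/-- Transfer of `mgrade` along a surjective ring map, for a module with compatible
actions on both sides. -/
lemma mgrade_eq_of_surjective' (φ : A →+* B) (hφ : Function.Surjective φ) (I : Ideal A)
    (M : Type u) [AddCommGroup M] [Module A M] [Module B M]
    (hsmul : ∀ (a : A) (m : M), a • m = φ a • m) :
    mgrade A I M = mgrade B (I.map φ) M := by
  have hcongr : ∀ as : List A, RingTheory.Sequence.IsRegular M as ↔
      RingTheory.Sequence.IsRegular M (as.map φ) := by
    intro as
    refine AddEquiv.isRegular_congr (e := AddEquiv.refl M) ?_
    rw [List.forall₂_map_right_iff]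
    refine List.forall₂_same.mpr ?_
    intro r _ x
    exact hsmul r x
  apply le_antisymm
  · refine sSup_le ?_
    rintro n ⟨rs, hmem, hreg, rfl⟩
    refine le_trans (le_of_eq ?_) (le_sSup ⟨rs.map φ, ?_, (hcongr rs).mp hreg, rfl⟩)
    · simp
    · intro b hb
      obtain ⟨a, ha, rfl⟩ := List.mem_map.mp hb
      exact Ideal.mem_map_of_mem φ (hmem a ha)
  · refine sSup_le ?_
    rintro n ⟨bs, hmem, hreg, rfl⟩
    obtain ⟨as, hamem, rfl⟩ := exists_preimage_list' φ hφ I bs hmem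
    refine le_trans (le_of_eq ?_) (le_sSup ⟨as, hamem, (hcongr as).mpr hreg, rfl⟩)
    simp

end Transfer

section Prod
variable {A : Type u} [CommRing A] [IsLocalRing A] [IsNoetherianRing A]

lemma smul_top_prod' (x : A) (M N : Type u) [AddCommGroup M] [Module A M]
    [AddCommGroup N] [Module A N] :
    x • (⊤ : Submodule A (M × N)) =
      (x • (⊤ : Submodule A M)).prod (x • (⊤ : Submodule A N)) := by
  ext ⟨m, n⟩
  rw [mem_smul_top_iff_exists', Submodule.mem_prod, mem_smul_top_iff_exists',
    mem_smul_top_iff_exists']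
  constructor
  · rintro ⟨⟨a, b⟩, hab⟩
    exact ⟨⟨a, congrArg Prod.fst hab⟩, ⟨b, congrArg Prod.snd hab⟩⟩
  · rintro ⟨⟨a, ha⟩, ⟨b, hb⟩⟩
    exact ⟨(a, b), by rw [Prod.smul_mk, ha, hb]⟩

noncomputable def quotProdEquiv' {M N : Type u} [AddCommGroup M] [Module A M]
    [AddCommGroup N] [Module A N] (p : Submodule A M) (q : Submodule A N) :
    ((M × N) ⧸ (p.prod q)) ≃ₗ[A] (M ⧸ p) × (N ⧸ q) := by
  have hle : p.prod q ≤ LinearMap.ker (p.mkQ.prodMap q.mkQ) := by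
    rintro ⟨m, n⟩ hmn
    rw [Submodule.mem_prod] at hmn
    rw [LinearMap.mem_ker]
    have h1 : p.mkQ m = 0 := (Submodule.Quotient.mk_eq_zero _).mpr hmn.1
    have h2 : q.mkQ n = 0 := (Submodule.Quotient.mk_eq_zero _).mpr hmn.2
    show (p.mkQ m, q.mkQ n) = (0, 0)
    rw [h1, h2]
  refine LinearEquiv.ofBijective (Submodule.liftQ (p.prod q) (p.mkQ.prodMap q.mkQ) hle)
    ⟨?_, ?_⟩
  · intro a b hab
    obtain ⟨⟨m, n⟩, rfl⟩ := Submodule.Quotient.mk_surjective _ a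
    obtain ⟨⟨m', n'⟩, rfl⟩ := Submodule.Quotient.mk_surjective _ b
    rw [Submodule.Quotient.eq]
    simp only [Submodule.liftQ_apply] at hab
    have h1 : p.mkQ m = p.mkQ m' := congrArg Prod.fst hab
    have h2 : q.mkQ n = q.mkQ n' := congrArg Prod.snd hab
    rw [Submodule.mem_prod]
    constructor
    · show m - m' ∈ p
      rw [← Submodule.Quotient.eq]
      exact h1
    · show n - n' ∈ q
      rw [← Submodule.Quotient.eq]
      exact h2
  · rintro ⟨a, b⟩
    obtain ⟨m, rfl⟩ := Submodule.Quotient.mk_surjective _ a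
    obtain ⟨n, rfl⟩ := Submodule.Quotient.mk_surjective _ b
    exact ⟨Submodule.Quotient.mk (m, n), rfl⟩

noncomputable def quotSMulTopProdEquiv' (x : A) (M N : Type u) [AddCommGroup M] [Module A M]
    [AddCommGroup N] [Module A N] :
    QuotSMulTop x (M × N) ≃ₗ[A] QuotSMulTop x M × QuotSMulTop x N :=
  (Submodule.quotEquivOfEq _ _ (smul_top_prod' x M N)) ≪≫ₗ (quotProdEquiv' _ _)

lemma isSMulRegular_prod' {M N : Type u} [AddCommGroup M] [Module A M] [AddCommGroup N]
    [Module A N] {x : A} (hM : IsSMulRegular M x) (hN : IsSMulRegular N x) :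
    IsSMulRegular (M × N) x := by
  rintro ⟨a, b⟩ ⟨c, d⟩ h
  have h1 : x • a = x • c := congrArg Prod.fst h
  have h2 : x • b = x • d := congrArg Prod.snd h
  exact Prod.ext (hM h1) (hN h2)

/-- grade of a product is at least the min of the grades. -/
lemma mgrade_prod' (k : ℕ) :
    ∀ (M N : Type u) [AddCommGroup M] [Module A M] [AddCommGroup N] [Module A N],
    ∀ [Module.Finite A M] [Module.Finite A N], ∀ [Nontrivial M] [Nontrivial N],
    ((k : ℕ) : ℕ∞) ≤ mgrade A (maximalIdeal A) M →
    ((k : ℕ) : ℕ∞) ≤ mgrade A (maximalIdeal A) N →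
    ((k : ℕ) : ℕ∞) ≤ mgrade A (maximalIdeal A) (M × N) := by
  induction k with
  | zero =>
    intro M N _ _ _ _ _ _ _ _ hM hN
    simp
  | succ k IH =>
    intro M N _ _ _ _ _ _ _ _ hM hN
    have hexM : ∃ x ∈ maximalIdeal A, IsSMulRegular M x := by
      refine exists_reg_of_one_le' (le_trans ?_ hM)
      exact_mod_cast Nat.le_add_left 1 k
    have hexN : ∃ x ∈ maximalIdeal A, IsSMulRegular N x := by
      refine exists_reg_of_one_le' (le_trans ?_ hN)
      exact_mod_cast Nat.le_add_left 1 k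
    obtain ⟨x, hx, hxM, hxN⟩ := exists_smul_regular_pair' M N hexM hexN
    have hxMN : IsSMulRegular (M × N) x := isSMulRegular_prod' hxM hxN
    haveI : Nontrivial (QuotSMulTop x M) := nontrivial_quotSMulTop' hx
    haveI : Nontrivial (QuotSMulTop x N) := nontrivial_quotSMulTop' hx
    have hM' := mgrade_quot_of_le' hx hxM hM
    have hN' := mgrade_quot_of_le' hx hxN hN
    have h := IH (QuotSMulTop x M) (QuotSMulTop x N) hM' hN'
    have h2 : ((k : ℕ) : ℕ∞) ≤ mgrade A (maximalIdeal A) (QuotSMulTop x (M × N)) := by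
      rwa [mgrade_congr' (quotSMulTopProdEquiv' x M N)]
    exact mgrade_cons_le' hx hxMN h2
end Prod

end FPpart6

end FiberProductDepthAux

open IsLocalRing in
set_option maxHeartbeats 1000000 in
set_option synthInstance.maxHeartbeats 200000 in
theorem statement_9
    {R S T : Type u} [CommRing R] [CommRing S] [CommRing T]
    [IsNoetherianRing R] [IsNoetherianRing S] [IsNoetherianRing T]
    [IsLocalRing R] [IsLocalRing S] [IsLocalRing T]
    (πR : R →+* T) (πS : S →+* T)
    (hπR : Function.Surjective πR) (hπS : Function.Surjective πS)
    (hkR : RingHom.ker πR ≠ ⊥) (hkS : RingHom.ker πS ≠ ⊥)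
    [IsNoetherianRing ↥(fiberProd πR πS)] [IsLocalRing ↥(fiberProd πR πS)]
    (n : ℕ)
    (hgT : mgrade T (mExtT πR πS) T = (n : ℕ∞))
    (hgR : (n : ℕ∞) < mgrade R (mExtR πR πS) R)
    (hgS : (n : ℕ∞) < mgrade S (mExtS πR πS) S) :
    rdepth (↥(fiberProd πR πS)) = (n : ℕ∞) + 1 := by
  set P := ↥(fiberProd πR πS)
  -- surjectivity of the projections
  have hηR : Function.Surjective (etaR πR πS) := by
    intro r
    obtain ⟨s, hs⟩ := hπS (πR r)
    exact ⟨⟨(r, s), hs.symm⟩, rfl⟩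
  have hηS : Function.Surjective (etaS πR πS) := by
    intro s
    obtain ⟨r, hr⟩ := hπR (πS s)
    exact ⟨⟨(r, s), hr⟩, rfl⟩
  have hφT : Function.Surjective (πR.comp (etaR πR πS)) := by
    rw [RingHom.coe_comp]
    exact hπR.comp hηR
  -- module structures over P
  letI : Module P R := Module.compHom R (etaR πR πS)
  letI : Module P S := Module.compHom S (etaS πR πS)
  letI : Module P T := Module.compHom T (πR.comp (etaR πR πS))
  have hsmulR : ∀ (a : P) (r : R), a • r = (etaR πR πS) a * r := fun _ _ => rfl
  have hsmulS : ∀ (a : P) (s : S), a • s = (etaS πR πS) a * s := fun _ _ => rfl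
  have hsmulT : ∀ (a : P) (t : T), a • t = (πR.comp (etaR πR πS)) a * t := fun _ _ => rfl
  -- the two linear maps
  have hprop : ∀ p : P, πR ((etaR πR πS) p) = πS ((etaS πR πS) p) := fun p => p.property
  let g : P →ₗ[P] (R × S) :=
    { toFun := fun p => ((etaR πR πS) p, (etaS πR πS) p)
      map_add' := by intro p q; ext <;> simp [map_add]
      map_smul' := by
        intro q p
        ext
        · show (etaR πR πS) (q • p) = q • ((etaR πR πS) p, (etaS πR πS) p).1
          rw [smul_eq_mul, map_mul, hsmulR]
        · show (etaS πR πS) (q • p) = q • ((etaR πR πS) p, (etaS πR πS) p).2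
          rw [smul_eq_mul, map_mul, hsmulS] }
  let f : (R × S) →ₗ[P] T :=
    { toFun := fun rs => πR rs.1 - πS rs.2
      map_add' := by intro a b; simp [map_add]; ring
      map_smul' := by
        rintro q ⟨r, s⟩
        show πR (q • r) - πS (q • s) = q • (πR r - πS s)
        rw [hsmulR, hsmulS, hsmulT, map_mul, map_mul]
        rw [RingHom.comp_apply, hprop q]
        ring }
  have hg : Function.Injective g := by
    intro a b hab
    have h1 : (a : R × S).1 = (b : R × S).1 := congrArg Prod.fst hab
    have h2 : (a : R × S).2 = (b : R × S).2 := congrArg Prod.snd hab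
    exact Subtype.ext (Prod.ext h1 h2)
  have hf : Function.Surjective f := by
    intro t
    obtain ⟨r, hr⟩ := hπR t
    exact ⟨(r, 0), by show πR r - πS 0 = t; rw [map_zero, sub_zero, hr]⟩
  have hex : Function.Exact g f := by
    intro rs
    constructor
    · intro h
      have h0 : πR rs.1 = πS rs.2 := by
        have : πR rs.1 - πS rs.2 = 0 := h
        linear_combination this
      exact ⟨⟨rs, h0⟩, rfl⟩
    · rintro ⟨p, rfl⟩
      show πR ((etaR πR πS) p) - πS ((etaS πR πS) p) = 0
      rw [hprop p, sub_self]
  -- instances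
  haveI : Nontrivial P := ⟨0, 1, fun h => by
    have h2 : ((0 : P) : R × S) = ((1 : P) : R × S) := Subtype.ext_iff.mp h
    have h3 : (0 : R) = 1 := congrArg Prod.fst h2
    exact zero_ne_one h3⟩
  haveI : Module.Finite P (R × S) := by
    let h2 : (P × P) →ₗ[P] R × S :=
      { toFun := fun pq => ((etaR πR πS) pq.1, (etaS πR πS) pq.2)
        map_add' := by intro a b; ext <;> simp [map_add]
        map_smul' := by
          rintro q ⟨p1, p2⟩
          ext
          · show (etaR πR πS) (q • p1) = q • ((etaR πR πS) p1, (etaS πR πS) p2).1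
            rw [smul_eq_mul, map_mul, hsmulR]
          · show (etaS πR πS) (q • p2) = q • ((etaR πR πS) p1, (etaS πR πS) p2).2
            rw [smul_eq_mul, map_mul, hsmulS] }
    refine Module.Finite.of_surjective h2 ?_
    rintro ⟨r, s⟩
    obtain ⟨p1, hp1⟩ := hηR r
    obtain ⟨p2, hp2⟩ := hηS s
    exact ⟨(p1, p2), by simp [h2, hp1, hp2]⟩
  haveI : Module.Finite P T := by
    let h3 : P →ₗ[P] T :=
      { toFun := fun p => (πR.comp (etaR πR πS)) p
        map_add' := fun a b => RingHom.map_add _ a b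
        map_smul' := by
          intro q p
          show (πR.comp (etaR πR πS)) (q • p) = q • ((πR.comp (etaR πR πS)) p)
          rw [smul_eq_mul, map_mul, hsmulT] }
    exact Module.Finite.of_surjective h3 hφT
  haveI : Module.Finite P R := by
    let h4 : P →ₗ[P] R :=
      { toFun := fun p => (etaR πR πS) p
        map_add' := fun a b => RingHom.map_add _ a b
        map_smul' := by
          intro q p
          show (etaR πR πS) (q • p) = q • ((etaR πR πS) p)
          rw [smul_eq_mul, map_mul, hsmulR] }
    exact Module.Finite.of_surjective h4 hηR
  haveI : Module.Finite P S := by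
    let h5 : P →ₗ[P] S :=
      { toFun := fun p => (etaS πR πS) p
        map_add' := fun a b => RingHom.map_add _ a b
        map_smul' := by
          intro q p
          show (etaS πR πS) (q • p) = q • ((etaS πR πS) p)
          rw [smul_eq_mul, map_mul, hsmulS] }
    exact Module.Finite.of_surjective h5 hηS
  -- transfer the grade hypotheses
  have htR : mgrade P (maximalIdeal P) R = mgrade R (mExtR πR πS) R :=
    mgrade_eq_of_surjective' (etaR πR πS) hηR (maximalIdeal P) R
      (fun a m => by rw [hsmulR]; rfl)
  have htS : mgrade P (maximalIdeal P) S = mgrade S (mExtS πR πS) S :=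
    mgrade_eq_of_surjective' (etaS πR πS) hηS (maximalIdeal P) S
      (fun a m => by rw [hsmulS]; rfl)
  have htT : mgrade P (maximalIdeal P) T = mgrade T (mExtT πR πS) T :=
    mgrade_eq_of_surjective' (πR.comp (etaR πR πS)) hφT (maximalIdeal P) T
      (fun a m => by rw [hsmulT]; rfl)
  have hR : ((n + 1 : ℕ) : ℕ∞) ≤ mgrade P (maximalIdeal P) R := by
    rw [htR]
    have := Order.add_one_le_of_lt hgR
    refine le_trans (le_of_eq ?_) this
    push_cast
    rfl
  have hS : ((n + 1 : ℕ) : ℕ∞) ≤ mgrade P (maximalIdeal P) S := by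
    rw [htS]
    have := Order.add_one_le_of_lt hgS
    refine le_trans (le_of_eq ?_) this
    push_cast
    rfl
  have hT : mgrade P (maximalIdeal P) T = ((n : ℕ) : ℕ∞) := by
    rw [htT, hgT]
  have hprod : ((n + 1 : ℕ) : ℕ∞) ≤ mgrade P (maximalIdeal P) (R × S) :=
    mgrade_prod' (n + 1) R S hR hS
  have hlow := depth_lower' n P (R × S) T g f hg hf hex hT.ge hprod
  have hup := depth_upper' n P (R × S) T g f hg hf hex hT hprod
  have : mgrade P (maximalIdeal P) P = ((n + 1 : ℕ) : ℕ∞) := le_antisymm hup hlow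
  show mgrade P (maximalIdeal P) P = (n : ℕ∞) + 1
  rw [this]
  push_cast
  rfl
end

section
/- Let R ×_T S be a nontrivial fiber product ring with maximal ideal m. Assume grade(mT, T) = n > 0. If depth(R) = 0 or depth(S) = 0, then depth(R ×_T S) = 0. -/
/-!
Common definitions: Betti numbers, Poincaré series, grade, depth, embedding
dimension, fiber product rings, and large homomorphisms.
-/

open CategoryTheory

universe u

/-! ### Auxiliary lemmas -/

open IsLocalRing RingTheory.Sequence in
/-- Surjective homomorphisms of local rings reflect units. -/
lemma aux_isUnit_of_isUnit_map {A B : Type u} [CommRing A] [CommRing B] [IsLocalRing A]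
    [IsLocalRing B] (f : A →+* B) (hf : Function.Surjective f) {a : A}
    (ha : IsUnit (f a)) : IsUnit a := by
  by_contra hna
  obtain ⟨r, hr⟩ := hf (↑ha.unit⁻¹)
  have h1 : f (a * r) = 1 := by
    rw [map_mul, hr]; exact ha.mul_val_inv
  have hker : a * r - 1 ∈ RingHom.ker f := by
    simp [RingHom.mem_ker, h1]
  have hkm : RingHom.ker f ≤ maximalIdeal A := by
    apply le_maximalIdeal
    intro htop
    have : (1 : A) ∈ RingHom.ker f := htop ▸ trivial
    simp [RingHom.mem_ker] at this
  have ham : a ∈ maximalIdeal A := by rwa [mem_maximalIdeal, mem_nonunits_iff]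
  have : (1 : A) ∈ maximalIdeal A := by
    have h2 : a * r ∈ maximalIdeal A := Ideal.mul_mem_right _ _ ham
    have h3 : a * r - 1 ∈ maximalIdeal A := hkm hker
    simpa using sub_mem h2 h3
  exact (maximalIdeal.isMaximal A).ne_top (Ideal.eq_top_of_isUnit_mem _ this isUnit_one)

open IsLocalRing RingTheory.Sequence in
/-- In a Noetherian local ring of depth zero every element of the maximal ideal
is a zerodivisor. -/
lemma aux_not_isSMulRegular_of_rdepth_eq_zero {A : Type u} [CommRing A] [IsNoetherianRing A]
    [IsLocalRing A] (hd : rdepth A = 0) {a : A} (ha : a ∈ maximalIdeal A) :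
    ¬ IsSMulRegular A a := by
  intro hreg
  have hwr : IsWeaklyRegular A [a] := by
    rw [isWeaklyRegular_cons_iff]
    exact ⟨hreg, IsWeaklyRegular.nil A (QuotSMulTop a A)⟩
  have htop : (⊤ : Submodule A A) ≠ Ideal.ofList [a] • ⊤ := by
    intro heq
    have h1 : (1 : A) ∈ Ideal.ofList [a] • (⊤ : Submodule A A) := heq ▸ trivial
    have h2 : Ideal.ofList [a] • (⊤ : Submodule A A) ≤ (maximalIdeal A : Submodule A A) := by
      refine Submodule.smul_le.mpr fun r hr n _ => ?_
      have hrm : r ∈ maximalIdeal A := by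
        have : Ideal.ofList [a] ≤ maximalIdeal A := by
          rw [Ideal.ofList_cons, Ideal.ofList_nil, sup_bot_eq, Ideal.span_le,
            Set.singleton_subset_iff]
          exact ha
        exact this hr
      exact Ideal.mul_mem_right _ _ hrm
    exact (maximalIdeal.isMaximal A).ne_top
      (Ideal.eq_top_of_isUnit_mem _ (h2 h1) isUnit_one)
  have hmem : (1 : ℕ∞) ∈ {n : ℕ∞ | ∃ rs : List A, (∀ r ∈ rs, r ∈ maximalIdeal A) ∧
      RingTheory.Sequence.IsRegular A rs ∧ n = rs.length} :=
    ⟨[a], by simpa using ha, ⟨hwr, htop⟩, by simp⟩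
  have : (1 : ℕ∞) ≤ rdepth A := le_sSup hmem
  rw [hd] at this
  simp at this

open IsLocalRing RingTheory.Sequence in
/-- Depth zero implies a nonzero socle element. -/
lemma aux_exists_socle_of_rdepth_eq_zero {A : Type u} [CommRing A] [IsNoetherianRing A]
    [IsLocalRing A] (hd : rdepth A = 0) :
    ∃ x : A, x ≠ 0 ∧ ∀ a ∈ maximalIdeal A, a * x = 0 := by
  classical
  obtain ⟨t, ht, hprim, -, hirr⟩ := Ideal.IsLasker.minimal (Ideal.isLasker A A) ⊥
  have hcover : (maximalIdeal A : Set A) ⊆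
      ⋃ J ∈ (t : Set (Ideal A)), (Ideal.radical J : Set A) := by
    intro a haM
    have hzd := aux_not_isSMulRegular_of_rdepth_eq_zero hd haM
    rw [IsSMulRegular] at hzd
    have : ∃ u v : A, a • u = a • v ∧ u ≠ v := by
      by_contra hc
      push_neg at hc
      exact hzd fun {u v} h => hc u v h
    obtain ⟨u, v, huv, hne⟩ := this
    have hu0 : a * (u - v) = 0 := by
      simp only [smul_eq_mul] at huv
      rw [mul_sub, huv, sub_self]
    have hne0 : u - v ≠ 0 := sub_ne_zero.mpr hne
    have : ∃ J ∈ t, u - v ∉ J := by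
      by_contra hc
      push_neg at hc
      have : u - v ∈ t.inf id := Submodule.mem_finsetInf.mpr hc
      rw [ht] at this
      exact hne0 this
    obtain ⟨J, hJt, hJuv⟩ := this
    have hmul : (u - v) * a ∈ J := by
      rw [mul_comm, hu0]; exact J.zero_mem
    rcases (Ideal.isPrimary_iff.mp (hprim hJt)).2 hmul with h | h
    · exact absurd h hJuv
    · exact Set.mem_biUnion hJt h
  have hsub : ∃ J ∈ t, maximalIdeal A ≤ Ideal.radical J :=
    (Ideal.subset_union_prime (⊥ : Ideal A) ⊥
      (fun i hi _ _ => Ideal.isPrime_radical (hprim hi))).mp hcover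
  obtain ⟨J, hJt, hle⟩ := hsub
  have hrad : Ideal.radical J = maximalIdeal A :=
    le_antisymm (le_maximalIdeal (Ideal.isPrime_radical (hprim hJt)).ne_top) hle
  obtain ⟨k0, hk0⟩ := Ideal.exists_radical_pow_le_of_fg J (IsNoetherian.noetherian _)
  rw [hrad] at hk0
  have := hirr hJt
  rw [SetLike.not_le_iff_exists] at this
  obtain ⟨x₀, hx₀mem, hx₀J⟩ := this
  have hex : ∃ k, ∀ z ∈ (maximalIdeal A) ^ k, z * x₀ ∈ J :=
    ⟨k0, fun z hz => Ideal.mul_mem_right _ J (hk0 hz)⟩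
  set k := Nat.find hex with hk
  have hkspec := Nat.find_spec hex
  have hk0' : k ≠ 0 := by
    intro h
    have := hkspec
    rw [← hk] at this
    have h1 := this 1 (by rw [h, pow_zero, Ideal.one_eq_top]; exact Submodule.mem_top)
    rw [one_mul] at h1
    exact hx₀J h1
  have hkm1 : ¬ ∀ z ∈ (maximalIdeal A) ^ (k - 1), z * x₀ ∈ J :=
    Nat.find_min hex (by omega)
  push_neg at hkm1
  obtain ⟨z, hz, hzJ⟩ := hkm1
  refine ⟨z * x₀, fun h0 => hzJ (by rw [h0]; exact J.zero_mem), fun a haM => ?_⟩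
  have hJ' : a * (z * x₀) ∈ J := by
    have hmem : a * z ∈ (maximalIdeal A) ^ k := by
      have hpow : (maximalIdeal A) ^ k = (maximalIdeal A) ^ (k - 1) * maximalIdeal A := by
        conv_lhs => rw [show k = (k - 1) + 1 by omega]
        rw [pow_succ]
      rw [hpow, mul_comm a z]
      exact Ideal.mul_mem_mul hz haM
    have := hkspec (a * z) hmem
    rwa [mul_assoc] at this
  have hrest : a * (z * x₀) ∈ (t.erase J).inf id := by
    refine Submodule.mem_finsetInf.mpr fun J' hJ't => ?_
    have hx₀J' : x₀ ∈ J' := Submodule.mem_finsetInf.mp hx₀mem J' hJ't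
    exact Ideal.mul_mem_left _ _ (Ideal.mul_mem_left _ _ hx₀J')
  have hbot : a * (z * x₀) ∈ (⊥ : Ideal A) := by
    rw [← ht, ← Finset.insert_erase hJt, Finset.inf_insert]
    exact ⟨hJ', hrest⟩
  simpa using hbot

section FiberProduct

open IsLocalRing RingTheory.Sequence

variable {R S T : Type u} [CommRing R] [CommRing S] [CommRing T]
    (πR : R →+* T) (πS : S →+* T)

lemma aux_fp_eq (z : ↥(fiberProd πR πS)) : πR z.1.1 = πS z.1.2 := z.2

variable [IsLocalRing R] [IsLocalRing S] [IsLocalRing T]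

/-- If both coordinates of an element of the fiber product are units, the element is a unit. -/
lemma aux_fp_isUnit {z : ↥(fiberProd πR πS)} (hu : IsUnit z.1.1) (hv : IsUnit z.1.2) :
    IsUnit z := by
  have heq : πR z.1.1 = πS z.1.2 := aux_fp_eq πR πS z
  set u : R := ↑hu.unit⁻¹ with hu'
  set v : S := ↑hv.unit⁻¹ with hv'
  have h1 : πR z.1.1 * πR u = 1 := by rw [← map_mul]; rw [hu']; rw [IsUnit.mul_val_inv]; exact map_one πR
  have h2 : πS z.1.2 * πS v = 1 := by rw [← map_mul]; rw [hv']; rw [IsUnit.mul_val_inv]; exact map_one πS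
  have huv : πR u = πS v := by
    calc πR u = πR u * (πS z.1.2 * πS v) := by rw [h2, mul_one]
    _ = (πR z.1.1 * πR u) * πS v := by rw [← heq]; ring
    _ = πS v := by rw [h1, one_mul]
  refine isUnit_iff_exists_inv.mpr ⟨⟨(u, v), huv⟩, ?_⟩
  apply Subtype.ext
  show (z.1 * (u, v)) = 1
  apply Prod.ext
  · show z.1.1 * u = 1
    rw [hu']; exact hu.mul_val_inv
  · show z.1.2 * v = 1
    rw [hv']; exact hv.mul_val_inv

variable (hπR : Function.Surjective πR) (hπS : Function.Surjective πS)
  [IsLocalRing ↥(fiberProd πR πS)]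

include hπR hπS in
/-- Elements of the maximal ideal of the fiber product have both coordinates
in the respective maximal ideals. -/
lemma aux_fp_mem_max {z : ↥(fiberProd πR πS)}
    (hz : z ∈ maximalIdeal ↥(fiberProd πR πS)) :
    z.1.1 ∈ maximalIdeal R ∧ z.1.2 ∈ maximalIdeal S := by
  have heq : πR z.1.1 = πS z.1.2 := aux_fp_eq πR πS z
  have hnu : ¬ IsUnit z := (mem_maximalIdeal z).mp hz
  constructor
  · rw [mem_maximalIdeal, mem_nonunits_iff]
    intro hu
    have hv : IsUnit z.1.2 :=
      aux_isUnit_of_isUnit_map πS hπS (heq ▸ hu.map πR)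
    exact hnu (aux_fp_isUnit πR πS hu hv)
  · rw [mem_maximalIdeal, mem_nonunits_iff]
    intro hv
    have hu : IsUnit z.1.1 := by
      refine aux_isUnit_of_isUnit_map πR hπR ?_
      rw [heq]; exact hv.map πS
    exact hnu (aux_fp_isUnit πR πS hu hv)

end FiberProduct

theorem statement_10
    {R S T : Type u} [CommRing R] [CommRing S] [CommRing T]
    [IsNoetherianRing R] [IsNoetherianRing S] [IsNoetherianRing T]
    [IsLocalRing R] [IsLocalRing S] [IsLocalRing T]
    (πR : R →+* T) (πS : S →+* T)
    (hπR : Function.Surjective πR) (hπS : Function.Surjective πS)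
    (hkR : RingHom.ker πR ≠ ⊥) (hkS : RingHom.ker πS ≠ ⊥)
    [IsNoetherianRing ↥(fiberProd πR πS)] [IsLocalRing ↥(fiberProd πR πS)]
    (n : ℕ) (hn : 0 < n)
    (hgT : mgrade T (mExtT πR πS) T = (n : ℕ∞))
    (h : rdepth R = 0 ∨ rdepth S = 0) :
    rdepth (↥(fiberProd πR πS)) = 0 := by
  classical
  -- a regular element of `T` inside `mExtT`
  have hreg : ∃ c ∈ mExtT πR πS, IsSMulRegular T c := by
    by_contra hc
    push_neg at hc
    have hall : ∀ s ∈ {m : ℕ∞ | ∃ rs : List T, (∀ r ∈ rs, r ∈ mExtT πR πS) ∧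
        RingTheory.Sequence.IsRegular T rs ∧ m = rs.length}, s ≤ 0 := by
      rintro s ⟨rs, hmem, hrsreg, rfl⟩
      cases rs with
      | nil => simp
      | cons r rest =>
        exfalso
        have h1 : IsSMulRegular T r :=
          ((RingTheory.Sequence.isWeaklyRegular_cons_iff T r rest).mp
            hrsreg.toIsWeaklyRegular).1
        exact hc r (hmem r (by simp)) h1
    have h0 : mgrade T (mExtT πR πS) T ≤ 0 := by
      unfold mgrade
      exact sSup_le hall
    rw [hgT] at h0
    have hn0 : (n : ℕ∞) = 0 := le_antisymm h0 zero_le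
    simp only [Nat.cast_eq_zero] at hn0
    omega
  obtain ⟨c, hcmem, hcreg⟩ := hreg
  rcases h with hR | hS
  · -- depth R = 0
    obtain ⟨x, hx0, hxm⟩ := aux_exists_socle_of_rdepth_eq_zero hR
    have hπx : πR x = 0 := by
      have hle : mExtT πR πS ≤ Ideal.torsionOf T T (πR x) := by
        rw [mExtT, Ideal.map_le_iff_le_comap]
        intro z hz
        rw [Ideal.mem_comap, Ideal.mem_torsionOf_iff, smul_eq_mul]
        have hz1 := (aux_fp_mem_max πR πS hπR hπS hz).1
        show πR z.1.1 * πR x = 0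
        rw [← map_mul, hxm _ hz1, map_zero]
      have hmem' := hle hcmem
      rw [Ideal.mem_torsionOf_iff, smul_eq_mul] at hmem'
      exact hcreg.right_eq_zero_of_smul (by rw [smul_eq_mul]; exact hmem')
    have hXmem : ((x, (0 : S)) : R × S) ∈ fiberProd πR πS := by
      show πR x = πS 0
      rw [hπx, map_zero]
    set X : ↥(fiberProd πR πS) := ⟨(x, 0), hXmem⟩ with hX
    have hXne : X ≠ 0 := by
      intro hXeq
      apply hx0
      have := congrArg (fun w : ↥(fiberProd πR πS) => (w : R × S).1) hXeq
      simpa [hX] using this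
    unfold rdepth mgrade
    apply le_antisymm _ zero_le
    apply sSup_le
    rintro s ⟨rs, hmem, hrsreg, rfl⟩
    cases rs with
    | nil => simp
    | cons z zs =>
      exfalso
      have hzmax : z ∈ IsLocalRing.maximalIdeal ↥(fiberProd πR πS) := hmem z (by simp)
      have hz1 := (aux_fp_mem_max πR πS hπR hπS hzmax).1
      have hsm : IsSMulRegular (↥(fiberProd πR πS)) z :=
        ((RingTheory.Sequence.isWeaklyRegular_cons_iff _ z zs).mp
          hrsreg.toIsWeaklyRegular).1
      have hzX : z * X = 0 := by
        apply Subtype.ext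
        show (z : R × S) * ((x, 0) : R × S) = ((0, 0) : R × S)
        rw [Prod.ext_iff]
        exact ⟨hxm _ hz1, mul_zero _⟩
      have hz0 : z • X = z • (0 : ↥(fiberProd πR πS)) := by
        rw [smul_eq_mul, smul_eq_mul, hzX, mul_zero]
      exact hXne (hsm hz0)
  · -- depth S = 0
    obtain ⟨y, hy0, hym⟩ := aux_exists_socle_of_rdepth_eq_zero hS
    have hπy : πS y = 0 := by
      have hle : mExtT πR πS ≤ Ideal.torsionOf T T (πS y) := by
        rw [mExtT, Ideal.map_le_iff_le_comap]
        intro z hz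
        rw [Ideal.mem_comap, Ideal.mem_torsionOf_iff, smul_eq_mul]
        have hz2 := (aux_fp_mem_max πR πS hπR hπS hz).2
        show πR z.1.1 * πS y = 0
        rw [aux_fp_eq πR πS z, ← map_mul, hym _ hz2, map_zero]
      have hmem' := hle hcmem
      rw [Ideal.mem_torsionOf_iff, smul_eq_mul] at hmem'
      exact hcreg.right_eq_zero_of_smul (by rw [smul_eq_mul]; exact hmem')
    have hXmem : (((0 : R), y) : R × S) ∈ fiberProd πR πS := by
      show πR 0 = πS y
      rw [hπy, map_zero]
    set X : ↥(fiberProd πR πS) := ⟨(0, y), hXmem⟩ with hX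
    have hXne : X ≠ 0 := by
      intro hXeq
      apply hy0
      have := congrArg (fun w : ↥(fiberProd πR πS) => (w : R × S).2) hXeq
      simpa [hX] using this
    unfold rdepth mgrade
    apply le_antisymm _ zero_le
    apply sSup_le
    rintro s ⟨rs, hmem, hrsreg, rfl⟩
    cases rs with
    | nil => simp
    | cons z zs =>
      exfalso
      have hzmax : z ∈ IsLocalRing.maximalIdeal ↥(fiberProd πR πS) := hmem z (by simp)
      have hz2 := (aux_fp_mem_max πR πS hπR hπS hzmax).2
      have hsm : IsSMulRegular (↥(fiberProd πR πS)) z :=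
        ((RingTheory.Sequence.isWeaklyRegular_cons_iff _ z zs).mp
          hrsreg.toIsWeaklyRegular).1
      have hzX : z * X = 0 := by
        apply Subtype.ext
        show (z : R × S) * ((0, y) : R × S) = ((0, 0) : R × S)
        rw [Prod.ext_iff]
        exact ⟨mul_zero _, hym _ hz2⟩
      have hz0 : z • X = z • (0 : ↥(fiberProd πR πS)) := by
        rw [smul_eq_mul, smul_eq_mul, hzX, mul_zero]
      exact hXne (hsm hz0)
end

section
/- Let (R, m_R, k) and (S, m_S, k) be commutative Noetherian local rings with common residue field k, with R ≠ k ≠ S, and let R ×_k S be the fiber product over the residue field (with structure maps the canonical surjections R → k and S → k). Then depth(R ×_k S) = min{ depth(R), depth(S), 1 }. -/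
/-!
Common definitions: Betti numbers, Poincaré series, grade, depth, embedding
dimension, fiber product rings, and large homomorphisms.
-/

open CategoryTheory

universe u

section Helpers

open IsLocalRing RingTheory.Sequence

/-- If every element of the maximal ideal is a zerodivisor, depth is zero. -/
lemma aux_rdepth_eq_zero (A : Type u) [CommRing A] [IsLocalRing A]
    (h : ∀ x ∈ IsLocalRing.maximalIdeal A, ¬ IsSMulRegular A x) : rdepth A = 0 := by
  unfold rdepth mgrade
  refine le_antisymm (sSup_le ?_) zero_le
  rintro n ⟨rs, hmem, hreg, rfl⟩
  cases rs with
  | nil => simp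
  | cons a t =>
    have := ((isWeaklyRegular_cons_iff A a t).mp hreg.toIsWeaklyRegular).1
    exact absurd this (h a (hmem a List.mem_cons_self))

/-- A single regular element of the maximal ideal forms a regular sequence. -/
lemma aux_isRegular_singleton (A : Type u) [CommRing A] [IsLocalRing A]
    {x : A} (hx : x ∈ IsLocalRing.maximalIdeal A) (hreg : IsSMulRegular A x) :
    RingTheory.Sequence.IsRegular A [x] := by
  refine ⟨(isWeaklyRegular_singleton_iff A x).mpr hreg, ?_⟩
  intro htop
  have hle : Ideal.ofList [x] • (⊤ : Submodule A A) ≤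
      (IsLocalRing.maximalIdeal A : Submodule A A) := by
    refine Submodule.smul_le.mpr fun r hr n _ => ?_
    have hrm : r ∈ IsLocalRing.maximalIdeal A := by
      have : Ideal.ofList [x] ≤ IsLocalRing.maximalIdeal A := by
        rw [Ideal.ofList_singleton]
        exact (Ideal.span_le).mpr (by simpa using hx)
      exact this hr
    simpa [smul_eq_mul] using Ideal.mul_mem_right n _ hrm
  rw [← htop] at hle
  exact (IsLocalRing.maximalIdeal.isMaximal A).ne_top (top_le_iff.mp hle)

/-- `1 ≤ rdepth` when there is a regular element in the maximal ideal. -/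
lemma aux_one_le_rdepth (A : Type u) [CommRing A] [IsLocalRing A]
    {x : A} (hx : x ∈ IsLocalRing.maximalIdeal A) (hreg : IsSMulRegular A x) :
    1 ≤ rdepth A := by
  unfold rdepth mgrade
  refine le_sSup ⟨[x], by simpa using hx, aux_isRegular_singleton A hx hreg, by simp⟩

end Helpers

set_option maxHeartbeats 1000000 in
set_option synthInstance.maxHeartbeats 400000 in
open Pointwise in
theorem statement_12
    {R S k : Type u} [CommRing R] [CommRing S] [Field k]
    [IsNoetherianRing R] [IsNoetherianRing S]
    [IsLocalRing R] [IsLocalRing S]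
    (πR : R →+* k) (πS : S →+* k)
    (hπR : Function.Surjective πR) (hπS : Function.Surjective πS)
    (hkR : RingHom.ker πR ≠ ⊥) (hkS : RingHom.ker πS ≠ ⊥)
    [IsNoetherianRing ↥(fiberProd πR πS)] [IsLocalRing ↥(fiberProd πR πS)] :
    rdepth (↥(fiberProd πR πS)) = min (min (rdepth R) (rdepth S)) 1 := by
  classical
  have hkerR : RingHom.ker πR = IsLocalRing.maximalIdeal R :=
    IsLocalRing.ker_eq_maximalIdeal πR hπR
  have hkerS : RingHom.ker πS = IsLocalRing.maximalIdeal S :=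
    IsLocalRing.ker_eq_maximalIdeal πS hπS
  obtain ⟨x₀, hx₀m, hx₀⟩ := (Submodule.ne_bot_iff _).mp hkR
  obtain ⟨y₀, hy₀m, hy₀⟩ := (Submodule.ne_bot_iff _).mp hkS
  have amem1 : ∀ a : (↥(fiberProd πR πS)), πR (a : R × S).1 = πS (a : R × S).2 := fun a => a.2
  -- characterization of the maximal ideal of the fiber product
  have hmax : ∀ a : (↥(fiberProd πR πS)), a ∈ IsLocalRing.maximalIdeal (↥(fiberProd πR πS)) ↔ πR (a : R × S).1 = 0 := by
    intro a
    constructor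
    · intro ha
      by_contra h0
      have hru : IsUnit (a : R × S).1 := by
        by_contra hru
        refine h0 (RingHom.mem_ker.mp ?_)
        rw [hkerR]
        exact (IsLocalRing.mem_maximalIdeal _).mpr hru
      have hsu : IsUnit (a : R × S).2 := by
        by_contra hsu
        have h2 : (a : R × S).2 ∈ RingHom.ker πS := by
          rw [hkerS]
          exact (IsLocalRing.mem_maximalIdeal _).mpr hsu
        exact h0 (by rw [amem1 a]; exact RingHom.mem_ker.mp h2)
      obtain ⟨u, hu⟩ := hru
      obtain ⟨v, hv⟩ := hsu
      have hinv : πR ↑u⁻¹ = πS ↑v⁻¹ := by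
        have h1 : πR ↑u⁻¹ * πR (a : R × S).1 = 1 := by
          rw [← hu, ← map_mul, Units.inv_mul, map_one]
        have h2 : πS ↑v⁻¹ * πR (a : R × S).1 = 1 := by
          rw [amem1 a, ← hv, ← map_mul, Units.inv_mul, map_one]
        exact mul_right_cancel₀ h0 (h1.trans h2.symm)
      have hb : ((↑u⁻¹, ↑v⁻¹) : R × S) ∈ fiberProd πR πS := hinv
      have hunit : IsUnit a := by
        refine IsUnit.of_mul_eq_one (a := a) ⟨(↑u⁻¹, ↑v⁻¹), hb⟩ (Subtype.ext ?_)
        show (a : R × S) * ((↑u⁻¹ : R), (↑v⁻¹ : S)) = 1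
        rw [Prod.ext_iff]
        constructor
        · show (a : R × S).1 * ↑u⁻¹ = 1
          rw [← hu, Units.mul_inv]
        · show (a : R × S).2 * ↑v⁻¹ = 1
          rw [← hv, Units.mul_inv]
      exact mem_nonunits_iff.mp ((IsLocalRing.mem_maximalIdeal a).mp ha) hunit
    · intro h0
      rw [IsLocalRing.mem_maximalIdeal, mem_nonunits_iff]
      intro hu
      obtain ⟨b, hb⟩ := hu.exists_right_inv
      have h1 : (a : R × S).1 * (b : R × S).1 = 1 := by
        have := congrArg (fun z : ↥(fiberProd πR πS) => (z : R × S).1) hb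
        simpa using this
      have h2 : πR (a : R × S).1 * πR ((b : R × S).1) = 1 := by
        rw [← map_mul, h1, map_one]
      rw [h0, zero_mul] at h2
      exact zero_ne_one h2
  -- components of a regular element of the maximal ideal are regular
  have reg_comp : ∀ a : (↥(fiberProd πR πS)), a ∈ IsLocalRing.maximalIdeal (↥(fiberProd πR πS)) → IsSMulRegular ↥(fiberProd πR πS) a →
      (∀ c : R, (a : R × S).1 * c = 0 → c = 0) ∧
      (∀ d : S, (a : R × S).2 * d = 0 → d = 0) := by
    intro a ha hreg
    have hr0 : πR (a : R × S).1 = 0 := (hmax a).mp ha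
    have hs0 : πS (a : R × S).2 = 0 := by rw [← amem1 a]; exact hr0
    have keyR : ∀ c : R, c ∈ RingHom.ker πR → (a : R × S).1 * c = 0 → c = 0 := by
      intro c hc hrc
      set t : ↥(fiberProd πR πS) := ⟨(c, 0), show πR c = πS 0 by rw [RingHom.mem_ker.mp hc, map_zero]⟩ with ht
      have h0 : a • t = a • 0 := by
        rw [smul_zero, smul_eq_mul]
        apply Subtype.ext
        show (a : R × S) * ((t : ↥(fiberProd πR πS)) : R × S) = 0
        rw [Prod.ext_iff]
        exact ⟨by simpa using hrc, by simp [ht]⟩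
      have := hreg h0
      exact congrArg (fun z : ↥(fiberProd πR πS) => (z : R × S).1) this
    have keyS : ∀ d : S, d ∈ RingHom.ker πS → (a : R × S).2 * d = 0 → d = 0 := by
      intro d hd hrd
      set t : ↥(fiberProd πR πS) := ⟨(0, d), show πR 0 = πS d by rw [RingHom.mem_ker.mp hd, map_zero]⟩ with ht
      have h0 : a • t = a • 0 := by
        rw [smul_zero, smul_eq_mul]
        apply Subtype.ext
        show (a : R × S) * ((t : ↥(fiberProd πR πS)) : R × S) = 0
        rw [Prod.ext_iff]
        exact ⟨by simp [ht], by simpa using hrd⟩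
      have := hreg h0
      exact congrArg (fun z : ↥(fiberProd πR πS) => (z : R × S).2) this
    have hrne : (a : R × S).1 ≠ 0 := by
      intro h0
      exact hx₀ (keyR x₀ hx₀m (by rw [h0, zero_mul]))
    have hsne : (a : R × S).2 ≠ 0 := by
      intro h0
      exact hy₀ (keyS y₀ hy₀m (by rw [h0, zero_mul]))
    constructor
    · intro c hc
      by_cases hcu : IsUnit c
      · obtain ⟨w, hw⟩ := hcu
        have : (a : R × S).1 = 0 := by
          have h1 := congrArg (fun z => z * (↑w⁻¹ : R)) hc
          simpa [← hw, mul_assoc] using h1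
        exact absurd this hrne
      · exact keyR c (hkerR ▸ (IsLocalRing.mem_maximalIdeal _).mpr hcu) hc
    · intro d hd
      by_cases hdu : IsUnit d
      · obtain ⟨w, hw⟩ := hdu
        have : (a : R × S).2 = 0 := by
          have h1 := congrArg (fun z => z * (↑w⁻¹ : S)) hd
          simpa [← hw, mul_assoc] using h1
        exact absurd this hsne
      · exact keyS d (hkerS ▸ (IsLocalRing.mem_maximalIdeal _).mpr hdu) hd
  by_cases hR1 : ∃ x ∈ IsLocalRing.maximalIdeal R, IsSMulRegular R x
  · by_cases hS1 : ∃ y ∈ IsLocalRing.maximalIdeal S, IsSMulRegular S y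
    · obtain ⟨x, hxm, hxreg⟩ := hR1
      obtain ⟨y, hym, hyreg⟩ := hS1
      have hrhs : min (min (rdepth R) (rdepth S)) 1 = 1 :=
        min_eq_right (le_min (aux_one_le_rdepth R hxm hxreg) (aux_one_le_rdepth S hym hyreg))
      rw [hrhs]
      -- the diagonal element (x, y) is regular on (↥(fiberProd πR πS))
      have hxy : ((x, y) : R × S) ∈ fiberProd πR πS := by
        show πR x = πS y
        rw [RingHom.mem_ker.mp (hkerR ▸ hxm : x ∈ RingHom.ker πR),
          RingHom.mem_ker.mp (hkerS ▸ hym : y ∈ RingHom.ker πS)]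
      set e : ↥(fiberProd πR πS) := ⟨(x, y), hxy⟩ with he
      have hem : e ∈ IsLocalRing.maximalIdeal (↥(fiberProd πR πS)) := by
        rw [hmax]
        exact RingHom.mem_ker.mp (hkerR ▸ hxm : x ∈ RingHom.ker πR)
      have hereg : IsSMulRegular ↥(fiberProd πR πS) e := by
        intro c d h
        apply Subtype.ext
        rw [Prod.ext_iff]
        have h1 := congrArg (fun z : ↥(fiberProd πR πS) => (z : R × S).1) h
        have h2 := congrArg (fun z : ↥(fiberProd πR πS) => (z : R × S).2) h
        simp only [smul_eq_mul] at h1 h2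
        constructor
        · exact hxreg (by simpa [smul_eq_mul] using h1)
        · exact hyreg (by simpa [smul_eq_mul] using h2)
      refine le_antisymm ?_ (aux_one_le_rdepth (↥(fiberProd πR πS)) hem hereg)
      unfold rdepth mgrade
      apply sSup_le
      rintro n ⟨rs, hmem, hreg, rfl⟩
      match rs, hmem, hreg with
      | [], _, _ => simp
      | [a], _, _ => simp
      | a :: b :: t, hmem, hreg =>
        exfalso
        have ham : a ∈ IsLocalRing.maximalIdeal (↥(fiberProd πR πS)) := hmem a (by simp)
        have hbm : b ∈ IsLocalRing.maximalIdeal (↥(fiberProd πR πS)) := hmem b (by simp)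
        obtain ⟨ha1, hrest⟩ :=
          (RingTheory.Sequence.isWeaklyRegular_cons_iff ↥(fiberProd πR πS) a (b :: t)).mp hreg.toIsWeaklyRegular
        have hb1 : IsSMulRegular (QuotSMulTop a ↥(fiberProd πR πS)) b :=
          ((RingTheory.Sequence.isWeaklyRegular_cons_iff _ b t).mp hrest).1
        obtain ⟨hax, hay⟩ := reg_comp a ham ha1
        have hx0 : πR (a : R × S).1 = 0 := (hmax a).mp ham
        have hu0 : πR (b : R × S).1 = 0 := (hmax b).mp hbm
        set t0 : ↥(fiberProd πR πS) :=
          ⟨((a : R × S).1, 0), show πR (a : R × S).1 = πS 0 by rw [hx0, map_zero]⟩ with ht0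
        set t1 : ↥(fiberProd πR πS) :=
          ⟨((b : R × S).1, 0), show πR (b : R × S).1 = πS 0 by rw [hu0, map_zero]⟩ with ht1
        have hbt : b * t0 = a * t1 := by
          apply Subtype.ext
          show (b : R × S) * ((t0 : ↥(fiberProd πR πS)) : R × S) = (a : R × S) * ((t1 : ↥(fiberProd πR πS)) : R × S)
          rw [Prod.ext_iff]
          exact ⟨by simp [ht0, ht1, mul_comm], by simp [ht0, ht1]⟩
        have hmem0 : (b • (Submodule.Quotient.mk t0 : QuotSMulTop a ↥(fiberProd πR πS))) = 0 := by
          rw [← Submodule.Quotient.mk_smul, Submodule.Quotient.mk_eq_zero, smul_eq_mul, hbt,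
            ← smul_eq_mul]
          exact Submodule.smul_mem_pointwise_smul t1 a ⊤ trivial
        have hne : (Submodule.Quotient.mk t0 : QuotSMulTop a ↥(fiberProd πR πS)) ≠ 0 := by
          rw [Ne, Submodule.Quotient.mk_eq_zero]
          intro hmemt
          have hset : t0 ∈ a • ((⊤ : Submodule (↥(fiberProd πR πS)) ↥(fiberProd πR πS)) : Set ↥(fiberProd πR πS)) := by
            rw [← Submodule.coe_pointwise_smul]; exact hmemt
          obtain ⟨w, -, hw⟩ := Set.mem_smul_set.mp hset
          have h1 : (a : R × S).1 * (w : R × S).1 = (a : R × S).1 := by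
            have := congrArg (fun z : ↥(fiberProd πR πS) => (z : R × S).1) hw
            simpa [smul_eq_mul, ht0] using this
          have h2 : (a : R × S).2 * (w : R × S).2 = 0 := by
            have := congrArg (fun z : ↥(fiberProd πR πS) => (z : R × S).2) hw
            simpa [smul_eq_mul, ht0] using this
          have hw2 : (w : R × S).2 = 0 := hay _ h2
          have hw1 : (w : R × S).1 = 1 := by
            have h3 : (a : R × S).1 * (1 - (w : R × S).1) = 0 := by
              rw [mul_sub, mul_one, h1, sub_self]
            have := hax _ h3
            linear_combination -this
          have := amem1 w
          rw [hw1, hw2, map_one, map_zero] at this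
          exact one_ne_zero this
        refine hne (hb1 ?_)
        show b • (Submodule.Quotient.mk t0 : QuotSMulTop a ↥(fiberProd πR πS)) = b • 0
        rw [smul_zero]
        exact hmem0
    · -- no regular element in m_S
      push_neg at hS1
      have hS0 : rdepth S = 0 := aux_rdepth_eq_zero S hS1
      have hrhs : min (min (rdepth R) (rdepth S)) 1 = 0 := by
        rw [hS0, min_eq_right (zero_le : (0 : ℕ∞) ≤ rdepth R), min_eq_left (zero_le : (0 : ℕ∞) ≤ 1)]
      rw [hrhs]
      apply aux_rdepth_eq_zero
      intro a ha hreg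
      have hs0 : πS (a : R × S).2 = 0 := by rw [← amem1 a]; exact (hmax a).mp ha
      have hsm : (a : R × S).2 ∈ IsLocalRing.maximalIdeal S := by
        rw [← hkerS]
        exact RingHom.mem_ker.mpr hs0
      refine hS1 _ hsm ?_
      intro c d h
      have := (reg_comp a ha hreg).2 (c - d) (by rw [mul_sub, sub_eq_zero]; exact h)
      exact sub_eq_zero.mp this
  · push_neg at hR1
    have hR0 : rdepth R = 0 := aux_rdepth_eq_zero R hR1
    have hrhs : min (min (rdepth R) (rdepth S)) 1 = 0 := by
      rw [hR0, min_eq_left (zero_le : (0 : ℕ∞) ≤ rdepth S), min_eq_left (zero_le : (0 : ℕ∞) ≤ 1)]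
    rw [hrhs]
    apply aux_rdepth_eq_zero
    intro a ha hreg
    have hr0 : πR (a : R × S).1 = 0 := (hmax a).mp ha
    have hrm : (a : R × S).1 ∈ IsLocalRing.maximalIdeal R := by
      rw [← hkerR]
      exact RingHom.mem_ker.mpr hr0
    refine hR1 _ hrm ?_
    intro c d h
    have := (reg_comp a ha hreg).1 (c - d) (by rw [mul_sub, sub_eq_zero]; exact h)
    exact sub_eq_zero.mp this
end

section
/- Let R ×_T S be a nontrivial fiber product ring with maximal ideal m. Suppose depth(T) = 0, grade(mR, R) > 0 and grade(mS, S) > 0. Then R ×_T S is Cohen-Macaulay if and only if R and S are Cohen-Macaulay local rings with dim(R) = dim(S) = dim(R ×_T S) = 1. -/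
/-!
Common definitions: Betti numbers, Poincaré series, grade, depth, embedding
dimension, fiber product rings, and large homomorphisms.
-/

open CategoryTheory

universe u

variable {R : Type*} [CommRing R] {M : Type*} [AddCommGroup M] [Module R M]

theorem assocPrimes_subset_union (N : Submodule R M) :
    associatedPrimes R M ⊆ associatedPrimes R N ∪ associatedPrimes R (M ⧸ N) := by
  exact associatedPrimes.subset_union_of_exact N.injective_subtype (LinearMap.exact_subtype_mkQ N)

theorem assocPrimes_finite (R M : Type*) [CommRing R] [IsNoetherianRing R]
    [AddCommGroup M] [Module R M] [Module.Finite R M] :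
    (associatedPrimes R M).Finite := by
  exact associatedPrimes.finite R M

/-- If every element of `I` is a zerodivisor on a finite module `M` over a
Noetherian ring, then some nonzero element of `M` is killed by all of `I`. -/
theorem exists_ann_of_zerodivisors (R M : Type*) [CommRing R] [IsNoetherianRing R]
    [AddCommGroup M] [Module R M] [Module.Finite R M] (I : Ideal R)
    (h : ∀ r ∈ I, ¬ IsSMulRegular M r) :
    ∃ x : M, x ≠ 0 ∧ ∀ r ∈ I, r • x = 0 := by
  have hZD : (I : Set R) ⊆ ⋃ p ∈ associatedPrimes R M, (p : Set R) := by
    intro r hr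
    rw [biUnion_associatedPrimes_eq_zero_divisors]
    have := h r hr
    rw [isSMulRegular_iff_right_eq_zero_of_smul] at this
    push_neg at this
    obtain ⟨x, hx1, hx2⟩ := this
    exact ⟨x, hx2, hx1⟩
  have hfin : (associatedPrimes R M).Finite := assocPrimes_finite R M
  have hsub : (I : Set R) ⊆ ⋃ p ∈ (hfin.toFinset : Set (Ideal R)), (p : Set R) := by
    intro r hr
    obtain ⟨s, ⟨q, rfl⟩, hmem⟩ := hZD hr
    simp only [Set.mem_iUnion] at hmem ⊢
    obtain ⟨hq, hrq⟩ := hmem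
    exact ⟨q, hfin.mem_toFinset.mpr hq, hrq⟩
  rw [Ideal.subset_union_prime ⊥ ⊥ (fun p hp _ _ => (hfin.mem_toFinset.mp hp).isPrime)] at hsub
  obtain ⟨p, hps, hIp⟩ := hsub
  obtain ⟨hp, x, hx⟩ := isAssociatedPrime_iff.mp (hfin.mem_toFinset.mp hps)
  refine ⟨x, ?_, fun r hr => ?_⟩
  · intro h0
    apply hp.ne_top
    rw [hx, h0, Submodule.colon_singleton_zero]
  · have : r ∈ p := hIp hr
    rw [hx, Submodule.mem_colon_singleton, Submodule.mem_bot] at this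
    exact this

theorem exists_regular_of_no_common_ann (R M : Type*) [CommRing R] [IsNoetherianRing R]
    [AddCommGroup M] [Module R M] [Module.Finite R M] (I : Ideal R)
    (h : ¬ ∃ x : M, x ≠ 0 ∧ ∀ r ∈ I, r • x = 0) :
    ∃ r ∈ I, IsSMulRegular M r := by
  by_contra hc
  push_neg at hc
  exact h (exists_ann_of_zerodivisors R M I hc)

section Helpers

open Pointwise

variable {A : Type*} [CommRing A]

lemma mem_smul_top_iff_ring (a z : A) :
    z ∈ a • (⊤ : Submodule A A) ↔ ∃ c, a * c = z := by
  rw [← SetLike.mem_coe, Submodule.coe_pointwise_smul]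
  constructor
  · rintro ⟨c, -, rfl⟩
    exact ⟨c, rfl⟩
  · rintro ⟨c, rfl⟩
    exact ⟨c, trivial, rfl⟩

/-- The exchange-lemma contradiction. -/
theorem no_second_regular {x x' y' u : A}
    (hx : IsSMulRegular A x) (hx' : IsSMulRegular A x')
    (hy' : IsSMulRegular (QuotSMulTop x' A) y')
    (hu : u ∉ Ideal.span {x}) (h1 : ∃ w, x' * u = x * w) (h2 : ∃ w, y' * u = x * w) :
    False := by
  obtain ⟨w, hw⟩ := h1
  obtain ⟨w', hw'⟩ := h2
  have key : x' * w' = y' * w := by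
    have h3 : x • (x' * w') = x • (y' * w) := by
      simp only [smul_eq_mul]
      calc x * (x' * w') = x' * (x * w') := by ring
      _ = x' * (y' * u) := by rw [← hw']
      _ = y' * (x' * u) := by ring
      _ = y' * (x * w) := by rw [hw]
      _ = x * (y' * w) := by ring
    exact hx h3
  -- y' * w ∈ x' • ⊤, hence w ∈ x' • ⊤
  have hmem : y' * w ∈ x' • (⊤ : Submodule A A) := by
    rw [mem_smul_top_iff_ring]
    exact ⟨w', key⟩
  have hw0 : (Submodule.Quotient.mk w : QuotSMulTop x' A) = 0 := by
    apply hy'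
    show y' • (Submodule.Quotient.mk w : QuotSMulTop x' A) = y' • 0
    rw [← Submodule.Quotient.mk_smul, smul_eq_mul, smul_zero,
      Submodule.Quotient.mk_eq_zero]
    exact hmem
  rw [Submodule.Quotient.mk_eq_zero, mem_smul_top_iff_ring] at hw0
  obtain ⟨c, hc⟩ := hw0
  apply hu
  rw [Ideal.mem_span_singleton']
  refine ⟨c, ?_⟩
  apply hx'
  simp only [smul_eq_mul]
  calc x' * (c * x) = x * (x' * c) := by ring
  _ = x * w := by rw [hc]
  _ = x' * u := hw.symm

/-- In a local ring of dimension ≤ 1, any prime containing a regular element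
is the maximal ideal. -/
theorem prime_eq_maximal_of_dim_le_one [IsLocalRing A]
    (hdim : ringKrullDim A ≤ 1) {x : A} (hx : IsSMulRegular A x)
    {p : Ideal A} (hp : p.IsPrime) (hxp : x ∈ p) :
    p = IsLocalRing.maximalIdeal A := by
  by_contra hne
  have hple : p < IsLocalRing.maximalIdeal A :=
    lt_of_le_of_ne (IsLocalRing.le_maximalIdeal hp.ne_top) hne
  -- p is a minimal prime
  have hmin : ∀ q : Ideal A, q.IsPrime → q ≤ p → q = p := by
    intro q hq hqp
    by_contra hqne
    have hqlt : q < p := lt_of_le_of_ne hqp hqne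
    -- build a chain of length 2
    have : (2 : ℕ) ≤ Order.krullDim (PrimeSpectrum A) := by
      have := Order.LTSeries.length_le_krullDim
        (p := RelSeries.mk 2
          (fun i => (![⟨q, hq⟩, ⟨p, hp⟩,
            ⟨IsLocalRing.maximalIdeal A, IsLocalRing.maximalIdeal.isMaximal A |>.isPrime⟩] :
              Fin 3 → PrimeSpectrum A) i)
          (by
            intro i
            fin_cases i
            · exact hqlt
            · exact hple))
      simpa using this
    rw [show ringKrullDim A = Order.krullDim (PrimeSpectrum A) from rfl] at hdim
    have : (2 : WithBot ℕ∞) ≤ 1 := le_trans (by exact_mod_cast this) hdim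
    norm_num at this
  -- localization argument
  letI L := Localization p.primeCompl
  have hnil : algebraMap A L x ∈ nilradical L := by
    rw [nilradical_eq_sInf, Submodule.mem_sInf]
    intro Q hQ
    haveI hQp : Ideal.IsPrime Q := hQ
    have hcomap : Ideal.comap (algebraMap A L) Q ≤ p := by
      intro z hz
      by_contra hzp
      have hunit : IsUnit (algebraMap A L z) :=
        IsLocalization.map_units L (⟨z, hzp⟩ : p.primeCompl)
      exact hQp.ne_top (Ideal.eq_top_of_isUnit_mem Q hz hunit)
    have := hmin _ (hQp.comap (algebraMap A L)) hcomap
    have hxq : x ∈ Ideal.comap (algebraMap A L) Q := by rw [this]; exact hxp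
    exact hxq
  obtain ⟨n, hn⟩ := mem_nilradical.mp hnil
  rw [← map_pow] at hn
  obtain ⟨⟨s, hs⟩, hsx⟩ := (IsLocalization.map_eq_zero_iff p.primeCompl L _).mp hn
  have : s = 0 := by
    apply hx.pow n
    simp only [smul_eq_mul]
    rw [mul_comm] at hsx
    simpa using hsx
  exact hs (this ▸ p.zero_mem)

/-- In a local ring with a regular element in the maximal ideal, dim ≥ 1. -/
theorem one_le_ringKrullDim_of_regular [IsLocalRing A] [Nontrivial A] {x : A}
    (hx : x ∈ IsLocalRing.maximalIdeal A) (hreg : IsSMulRegular A x) :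
    1 ≤ ringKrullDim A := by
  by_cases h : ∃ p : Ideal A, p.IsPrime ∧ p ≠ IsLocalRing.maximalIdeal A
  · obtain ⟨p, hp, hne⟩ := h
    have hlt : p < IsLocalRing.maximalIdeal A :=
      lt_of_le_of_ne (IsLocalRing.le_maximalIdeal hp.ne_top) hne
    have := Order.LTSeries.length_le_krullDim
      (p := RelSeries.mk 1
        (fun i => (![⟨p, hp⟩,
          ⟨IsLocalRing.maximalIdeal A, IsLocalRing.maximalIdeal.isMaximal A |>.isPrime⟩] :
            Fin 2 → PrimeSpectrum A) i)
        (by intro i; fin_cases i; exact hlt))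
    rw [show ringKrullDim A = Order.krullDim (PrimeSpectrum A) from rfl]
    simpa using this
  · exfalso
    push_neg at h
    have hxnil : x ∈ nilradical A := by
      rw [nilradical_eq_sInf, Submodule.mem_sInf]
      intro q hq
      rw [h q hq]
      exact hx
    obtain ⟨n, hn⟩ := mem_nilradical.mp hxnil
    have : (1 : A) = 0 := by
      apply hreg.pow n
      simp [hn]
    exact one_ne_zero this

/-- In a Noetherian local ring of dimension ≤ 1 there is no regular sequence
of length two in the maximal ideal. -/
theorem no_length_two_sequence [IsLocalRing A] [IsNoetherianRing A]
    (hdim : ringKrullDim A ≤ 1) {x y : A}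
    (hx : x ∈ IsLocalRing.maximalIdeal A) (hy : y ∈ IsLocalRing.maximalIdeal A)
    (hxr : IsSMulRegular A x) (hyr : IsSMulRegular (QuotSMulTop x A) y) :
    False := by
  have hrad : IsLocalRing.maximalIdeal A ≤ (Ideal.span {x}).radical := by
    rw [Ideal.radical_eq_sInf]
    apply le_sInf
    rintro J ⟨hJ1, hJ2⟩
    rw [prime_eq_maximal_of_dim_le_one hdim hxr hJ2
      (hJ1 (Ideal.mem_span_singleton_self x))]
  obtain ⟨n, hn⟩ := Ideal.exists_pow_le_of_le_radical_of_fg_radical hrad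
    (IsNoetherian.noetherian _)
  have hyn : y ^ n ∈ Ideal.span {x} := hn (Ideal.pow_mem_pow hy n)
  have h1 : (Submodule.Quotient.mk (1 : A) : QuotSMulTop x A) = 0 := by
    apply hyr.pow n
    show (y ^ n) • (Submodule.Quotient.mk (1 : A) : QuotSMulTop x A) = (y ^ n) • 0
    rw [← Submodule.Quotient.mk_smul, smul_zero, Submodule.Quotient.mk_eq_zero,
      smul_eq_mul, mul_one, mem_smul_top_iff_ring]
    rw [Ideal.mem_span_singleton'] at hyn
    obtain ⟨c, hc⟩ := hyn
    exact ⟨c, by rw [mul_comm]; exact hc⟩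
  rw [Submodule.Quotient.mk_eq_zero, mem_smul_top_iff_ring] at h1
  obtain ⟨c, hc⟩ := h1
  have : IsUnit x := IsUnit.of_mul_eq_one c hc
  exact hx this

end Helpers

section MgradeHelpers

open RingTheory.Sequence

lemma top_ne_ofList_smul {A : Type u} [CommRing A] {I : Ideal A} (hI : I ≠ ⊤)
    {rs : List A} (hrs : ∀ r ∈ rs, r ∈ I) :
    (⊤ : Submodule A A) ≠ Ideal.ofList rs • ⊤ := by
  intro h
  apply hI
  rw [Ideal.eq_top_iff_one]
  have h1 : (1 : A) ∈ Ideal.ofList rs • (⊤ : Submodule A A) := by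
    rw [← h]; trivial
  have h2 : Ideal.ofList rs • (⊤ : Submodule A A) ≤ (I : Submodule A A) := by
    apply Submodule.smul_le.mpr
    intro r hr n _
    have hrI : r ∈ I := by
      have : Ideal.ofList rs ≤ I := Ideal.span_le.mpr (fun z hz => hrs z hz)
      exact this hr
    exact I.mul_mem_right n hrI
  exact h2 h1

lemma exists_regular_of_mgrade_pos {A : Type u} [CommRing A] {I : Ideal A}
    (h : 0 < mgrade A I A) : ∃ r ∈ I, IsSMulRegular A r := by
  rw [mgrade] at h
  obtain ⟨n, hn, hpos⟩ := lt_sSup_iff.mp h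
  obtain ⟨rs, hrs, hreg, rfl⟩ := hn
  match rs, hrs, hreg with
  | [], _, _ => simp at hpos
  | r :: tl, hrs, hreg =>
    refine ⟨r, hrs r List.mem_cons_self, ?_⟩
    exact ((RingTheory.Sequence.isRegular_cons_iff A r tl).mp hreg).1

lemma one_le_mgrade {A : Type u} [CommRing A] {I : Ideal A} (hI : I ≠ ⊤)
    {r : A} (hr : r ∈ I) (hreg : IsSMulRegular A r) : 1 ≤ mgrade A I A := by
  apply le_sSup
  refine ⟨[r], by simpa using hr, ?_, by simp⟩
  refine ⟨?_, top_ne_ofList_smul hI (by simpa using hr)⟩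
  exact RingTheory.Sequence.IsWeaklyRegular.cons hreg (RingTheory.Sequence.IsWeaklyRegular.nil A _)

lemma mgrade_le_one {A : Type u} [CommRing A] (I : Ideal A)
    (h : ∀ x y : A, x ∈ I → y ∈ I → IsSMulRegular A x →
      IsSMulRegular (QuotSMulTop x A) y → False) :
    mgrade A I A ≤ 1 := by
  apply sSup_le
  rintro n ⟨rs, hrs, hreg, rfl⟩
  match rs, hrs, hreg with
  | [], _, _ => simp
  | [r], _, _ => simp
  | x :: y :: tl, hrs, hreg =>
    exfalso
    obtain ⟨hx, hrest⟩ := (RingTheory.Sequence.isRegular_cons_iff A x (y :: tl)).mp hreg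
    obtain ⟨hy, -⟩ := (RingTheory.Sequence.isRegular_cons_iff _ y tl).mp hrest
    exact h x y (hrs x (by simp)) (hrs y (by simp)) hx hy

lemma no_regular_of_rdepth_zero {A : Type u} [CommRing A] [IsLocalRing A]
    (h : rdepth A = 0) {r : A} (hr : r ∈ IsLocalRing.maximalIdeal A) :
    ¬ IsSMulRegular A r := by
  intro hreg
  have := one_le_mgrade (Ideal.IsMaximal.ne_top (IsLocalRing.maximalIdeal.isMaximal A)) hr hreg
  rw [rdepth] at h
  rw [h] at this
  norm_num at this

end MgradeHelpers

set_option maxHeartbeats 1000000 in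
theorem statement_17
    {R S T : Type u} [CommRing R] [CommRing S] [CommRing T]
    [IsNoetherianRing R] [IsNoetherianRing S] [IsNoetherianRing T]
    [IsLocalRing R] [IsLocalRing S] [IsLocalRing T]
    (πR : R →+* T) (πS : S →+* T)
    (hπR : Function.Surjective πR) (hπS : Function.Surjective πS)
    (hkR : RingHom.ker πR ≠ ⊥) (hkS : RingHom.ker πS ≠ ⊥)
    [IsNoetherianRing ↥(fiberProd πR πS)] [IsLocalRing ↥(fiberProd πR πS)]
    (hdT : rdepth T = 0)
    (hgR : 0 < mgrade R (mExtR πR πS) R)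
    (hgS : 0 < mgrade S (mExtS πR πS) S) :
    ((rdepth (↥(fiberProd πR πS)) : WithBot ℕ∞) = ringKrullDim (↥(fiberProd πR πS))) ↔
      (((rdepth R : ℕ∞) : WithBot ℕ∞) = ringKrullDim R ∧
        ((rdepth S : ℕ∞) : WithBot ℕ∞) = ringKrullDim S ∧
        ringKrullDim R = 1 ∧ ringKrullDim S = 1 ∧
        ringKrullDim (↥(fiberProd πR πS)) = 1) := by
  classical
  -- structural facts about the fiber product
  have hsurjR : Function.Surjective (etaR πR πS) := by
    intro r
    obtain ⟨s, hs⟩ := hπS (πR r)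
    exact ⟨⟨(r, s), hs.symm⟩, rfl⟩
  have hsurjS : Function.Surjective (etaS πR πS) := by
    intro s
    obtain ⟨r, hr⟩ := hπR (πS s)
    exact ⟨⟨(r, s), hr⟩, rfl⟩
  have hcomR : Ideal.comap πR (IsLocalRing.maximalIdeal T) = IsLocalRing.maximalIdeal R := by
    haveI := Ideal.comap_isMaximal_of_surjective πR hπR (K := IsLocalRing.maximalIdeal T)
    exact (IsLocalRing.eq_maximalIdeal this)
  have hcomS : Ideal.comap πS (IsLocalRing.maximalIdeal T) = IsLocalRing.maximalIdeal S := by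
    haveI := Ideal.comap_isMaximal_of_surjective πS hπS (K := IsLocalRing.maximalIdeal T)
    exact (IsLocalRing.eq_maximalIdeal this)
  have hval : ∀ z : ↥(fiberProd πR πS), πR (z : R × S).1 = πS (z : R × S).2 :=
    fun z => z.2
  -- unit transfer between the two components
  have himp1 : ∀ z : ↥(fiberProd πR πS), IsUnit (z : R × S).1 → IsUnit (z : R × S).2 := by
    intro z hu
    by_contra hs
    have h1 : (z : R × S).2 ∈ IsLocalRing.maximalIdeal S := hs
    have h2 : πS (z : R × S).2 ∈ IsLocalRing.maximalIdeal T := by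
      rw [← hcomS] at h1; exact h1
    rw [← hval z] at h2
    exact (mem_nonunits_iff.mp h2) (hu.map πR)
  have himp2 : ∀ z : ↥(fiberProd πR πS), IsUnit (z : R × S).2 → IsUnit (z : R × S).1 := by
    intro z hu
    by_contra hs
    have h1 : (z : R × S).1 ∈ IsLocalRing.maximalIdeal R := hs
    have h2 : πR (z : R × S).1 ∈ IsLocalRing.maximalIdeal T := by
      rw [← hcomR] at h1; exact h1
    rw [hval z] at h2
    exact (mem_nonunits_iff.mp h2) (hu.map πS)
  have hunit : ∀ z : ↥(fiberProd πR πS), IsUnit z ↔ IsUnit (z : R × S).1 := by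
    intro z
    constructor
    · intro hz
      exact hz.map (etaR πR πS)
    · intro h1
      have h2 : IsUnit (z : R × S).2 := himp1 z h1
      obtain ⟨u1, hu1⟩ := h1
      obtain ⟨u2, hu2⟩ := h2
      have e1 : πR (z : R × S).1 * πR (↑u1⁻¹ : R) = 1 := by
        rw [← hu1, ← map_mul, Units.mul_inv, map_one]
      have e2 : πS (z : R × S).2 * πS (↑u2⁻¹ : S) = 1 := by
        rw [← hu2, ← map_mul, Units.mul_inv, map_one]
      have hinv : πR (↑u1⁻¹ : R) = πS (↑u2⁻¹ : S) := by
        calc πR (↑u1⁻¹ : R) = πR (↑u1⁻¹ : R) * (πS (z : R × S).2 * πS (↑u2⁻¹ : S)) := by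
              rw [e2, mul_one]
        _ = (πR (z : R × S).1 * πR (↑u1⁻¹ : R)) * πS (↑u2⁻¹ : S) := by
              rw [hval z]; ring
        _ = πS (↑u2⁻¹ : S) := by rw [e1, one_mul]
      refine IsUnit.of_mul_eq_one (a := z) ⟨((↑u1⁻¹ : R), (↑u2⁻¹ : S)), hinv⟩ ?_
      apply Subtype.ext
      rw [Prod.ext_iff]
      constructor
      · show (z : R × S).1 * (↑u1⁻¹ : R) = 1
        rw [← hu1]; exact Units.mul_inv u1
      · show (z : R × S).2 * (↑u2⁻¹ : S) = 1
        rw [← hu2]; exact Units.mul_inv u2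
  have hmemm : ∀ z : ↥(fiberProd πR πS),
      z ∈ IsLocalRing.maximalIdeal ↥(fiberProd πR πS) ↔
        (z : R × S).1 ∈ IsLocalRing.maximalIdeal R := by
    intro z
    rw [IsLocalRing.mem_maximalIdeal, IsLocalRing.mem_maximalIdeal,
      mem_nonunits_iff, mem_nonunits_iff]
    exact not_congr (hunit z)
  have hmemm2 : ∀ z : ↥(fiberProd πR πS),
      z ∈ IsLocalRing.maximalIdeal ↥(fiberProd πR πS) ↔
        (z : R × S).2 ∈ IsLocalRing.maximalIdeal S := by
    intro z
    rw [IsLocalRing.mem_maximalIdeal, IsLocalRing.mem_maximalIdeal,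
      mem_nonunits_iff, mem_nonunits_iff]
    constructor
    · intro hz hu
      exact hz ((hunit z).mpr (himp2 z hu))
    · intro hz hu
      exact hz (himp1 z ((hunit z).mp hu))
  have hmaxR : mExtR πR πS = IsLocalRing.maximalIdeal R := by
    apply le_antisymm
    · rw [mExtR, Ideal.map_le_iff_le_comap]
      intro z hz
      exact (hmemm z).mp hz
    · intro r hr
      obtain ⟨s, hs⟩ := hπS (πR r)
      exact Ideal.mem_map_of_mem _ ((hmemm ⟨(r, s), hs.symm⟩).mpr hr)
  have hmaxS : mExtS πR πS = IsLocalRing.maximalIdeal S := by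
    apply le_antisymm
    · rw [mExtS, Ideal.map_le_iff_le_comap]
      intro z hz
      exact (hmemm2 z).mp hz
    · intro s hsm
      obtain ⟨r, hr⟩ := hπR (πS s)
      exact Ideal.mem_map_of_mem _ ((hmemm2 ⟨(r, s), hr⟩).mpr hsm)
  -- module structures
  letI modPR : Module (↥(fiberProd πR πS)) R := Module.compHom R (etaR πR πS)
  letI modPS : Module (↥(fiberProd πR πS)) S := Module.compHom S (etaS πR πS)
  have hsmulR : ∀ (z : ↥(fiberProd πR πS)) (a : R), z • a = (z : R × S).1 * a :=
    fun z a => rfl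
  have hsmulS : ∀ (z : ↥(fiberProd πR πS)) (b : S), z • b = (z : R × S).2 * b :=
    fun z b => rfl
  haveI finPR : Module.Finite (↥(fiberProd πR πS)) R := by
    apply Module.Finite.of_surjective
      (M := ↥(fiberProd πR πS)) (P := R) (σ := RingHom.id _)
      { toFun := etaR πR πS
        map_add' := fun a b => map_add (etaR πR πS) a b
        map_smul' := fun c z => map_mul (etaR πR πS) c z }
    exact hsurjR
  haveI finPS : Module.Finite (↥(fiberProd πR πS)) S := by
    apply Module.Finite.of_surjective
      (M := ↥(fiberProd πR πS)) (P := S) (σ := RingHom.id _)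
      { toFun := etaS πR πS
        map_add' := fun a b => map_add (etaS πR πS) a b
        map_smul' := fun c z => map_mul (etaS πR πS) c z }
    exact hsurjS
  haveI finPRS : Module.Finite (↥(fiberProd πR πS)) (R × S) := Module.Finite.prod
  -- regular elements of R and S coming from the grade hypotheses
  obtain ⟨rR, hrRm, hrRreg⟩ := exists_regular_of_mgrade_pos hgR
  rw [hmaxR] at hrRm
  obtain ⟨rS, hrSm, hrSreg⟩ := exists_regular_of_mgrade_pos hgS
  rw [hmaxS] at hrSm
  -- T facts
  have hTzd : ∀ w ∈ IsLocalRing.maximalIdeal T, ¬ IsSMulRegular T w :=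
    fun w hw => no_regular_of_rdepth_zero hdT hw
  obtain ⟨t, ht0, htann⟩ := exists_ann_of_zerodivisors T T (IsLocalRing.maximalIdeal T) hTzd
  -- a common regular element
  have hann : ¬ ∃ u : R × S, u ≠ 0 ∧
      ∀ z ∈ IsLocalRing.maximalIdeal ↥(fiberProd πR πS), z • u = 0 := by
    rintro ⟨⟨a, b⟩, hu0, hu⟩
    obtain ⟨s, hs⟩ := hπS (πR rR)
    have hzR : (⟨(rR, s), hs.symm⟩ : ↥(fiberProd πR πS)) ∈
        IsLocalRing.maximalIdeal ↥(fiberProd πR πS) := (hmemm _).mpr hrRm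
    obtain ⟨r, hr⟩ := hπR (πS rS)
    have hzS : (⟨(r, rS), hr⟩ : ↥(fiberProd πR πS)) ∈
        IsLocalRing.maximalIdeal ↥(fiberProd πR πS) := (hmemm2 _).mpr hrSm
    have ha : a = 0 := by
      have h1 : (⟨(rR, s), hs.symm⟩ : ↥(fiberProd πR πS)) • a = 0 :=
        congrArg Prod.fst (hu _ hzR)
      have h2 : rR • a = rR • (0 : R) := by rw [smul_zero]; exact h1
      exact hrRreg h2
    have hb : b = 0 := by
      have h1 : (⟨(r, rS), hr⟩ : ↥(fiberProd πR πS)) • b = 0 :=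
        congrArg Prod.snd (hu _ hzS)
      have h2 : rS • b = rS • (0 : S) := by rw [smul_zero]; exact h1
      exact hrSreg h2
    exact hu0 (by rw [ha, hb]; rfl)
  obtain ⟨x, hxm, hxreg⟩ := exists_regular_of_no_common_ann (↥(fiberProd πR πS)) (R × S)
    (IsLocalRing.maximalIdeal ↥(fiberProd πR πS)) hann
  have hxR : IsSMulRegular R (x : R × S).1 := by
    apply isSMulRegular_iff_right_eq_zero_of_smul.mpr
    intro a ha
    have e : x • ((a, 0) : R × S) = x • (0 : R × S) := by
      rw [smul_zero]
      rw [Prod.ext_iff]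
      refine ⟨?_, ?_⟩
      · show x • a = (0 : R × S).1
        rw [hsmulR]
        exact ha
      · show x • (0 : S) = (0 : R × S).2
        rw [smul_zero]
        rfl
    have := hxreg e
    exact congrArg Prod.fst this
  have hxS : IsSMulRegular S (x : R × S).2 := by
    apply isSMulRegular_iff_right_eq_zero_of_smul.mpr
    intro b hb
    have e : x • ((0, b) : R × S) = x • (0 : R × S) := by
      rw [smul_zero]
      rw [Prod.ext_iff]
      refine ⟨?_, ?_⟩
      · show x • (0 : R) = (0 : R × S).1
        rw [smul_zero]
        rfl
      · show x • b = (0 : R × S).2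
        rw [hsmulS]
        exact hb
    have := hxreg e
    exact congrArg Prod.snd this
  have hxP : IsSMulRegular (↥(fiberProd πR πS)) x := by
    apply isSMulRegular_iff_right_eq_zero_of_smul.mpr
    intro p hp
    have hp' : (x : R × S) * (p : R × S) = 0 := congrArg Subtype.val hp
    have h1 : (x : R × S).1 * (p : R × S).1 = 0 := congrArg Prod.fst hp'
    have h2 : (x : R × S).2 * (p : R × S).2 = 0 := congrArg Prod.snd hp'
    apply Subtype.ext
    rw [Prod.ext_iff]
    constructor
    · show (p : R × S).1 = (0 : R)
      refine hxR ?_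
      show (x : R × S).1 • (p : R × S).1 = (x : R × S).1 • (0 : R)
      rw [smul_eq_mul, smul_eq_mul, mul_zero]
      exact h1
    · show (p : R × S).2 = (0 : S)
      refine hxS ?_
      show (x : R × S).2 • (p : R × S).2 = (x : R × S).2 • (0 : S)
      rw [smul_eq_mul, smul_eq_mul, mul_zero]
      exact h2
  -- depth of the fiber product is 1
  have hdepthP : rdepth (↥(fiberProd πR πS)) = 1 := by
    apply le_antisymm
    · apply mgrade_le_one
      intro a b ham hbm hareg hbreg
      obtain ⟨r, hrt⟩ := hπR t
      have hbmem : ∀ z : ↥(fiberProd πR πS),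
          z ∈ IsLocalRing.maximalIdeal ↥(fiberProd πR πS) →
          πR ((z : R × S).1 * r) = πS (0 : S) := by
        intro z hz
        rw [map_mul, hrt, map_zero]
        have h1 : (z : R × S).1 ∈ IsLocalRing.maximalIdeal R := (hmemm z).mp hz
        have h2 : πR (z : R × S).1 ∈ IsLocalRing.maximalIdeal T := by
          rw [← hcomR] at h1; exact h1
        exact htann _ h2
      have hu : (⟨((x : R × S).1 * r, 0), hbmem x hxm⟩ : ↥(fiberProd πR πS)) ∉
          Ideal.span {x} := by
        intro hc
        rw [Ideal.mem_span_singleton'] at hc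
        obtain ⟨c, hc⟩ := hc
        have hc' : (c : R × S) * (x : R × S) = ((x : R × S).1 * r, 0) :=
          congrArg Subtype.val hc
        have hc1 : (c : R × S).1 * (x : R × S).1 = (x : R × S).1 * r :=
          congrArg Prod.fst hc'
        have hc2 : (c : R × S).2 * (x : R × S).2 = 0 := congrArg Prod.snd hc'
        have hceq1 : (c : R × S).1 = r := by
          apply hxR
          show (x : R × S).1 * (c : R × S).1 = (x : R × S).1 * r
          rw [← hc1]; ring
        have hceq2 : (c : R × S).2 = 0 := by
          apply hxS
          show (x : R × S).2 * (c : R × S).2 = (x : R × S).2 * 0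
          rw [mul_zero, ← hc2]; ring
        have := hval c
        rw [hceq1, hceq2, map_zero, hrt] at this
        exact ht0 this
      apply no_second_regular hxP hareg hbreg hu
      · refine ⟨⟨((a : R × S).1 * r, 0), hbmem a ham⟩, ?_⟩
        apply Subtype.ext
        rw [Prod.ext_iff]
        constructor
        · show (a : R × S).1 * ((x : R × S).1 * r) = (x : R × S).1 * ((a : R × S).1 * r)
          ring
        · show (a : R × S).2 * 0 = (x : R × S).2 * 0
          simp
      · refine ⟨⟨((b : R × S).1 * r, 0), hbmem b hbm⟩, ?_⟩
        apply Subtype.ext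
        rw [Prod.ext_iff]
        constructor
        · show (b : R × S).1 * ((x : R × S).1 * r) = (x : R × S).1 * ((b : R × S).1 * r)
          ring
        · show (b : R × S).2 * 0 = (x : R × S).2 * 0
          simp
    · exact one_le_mgrade
        (Ideal.IsMaximal.ne_top (IsLocalRing.maximalIdeal.isMaximal _)) hxm hxP
  have hcoe1 : ((1 : ℕ∞) : WithBot ℕ∞) = (1 : WithBot ℕ∞) := rfl
  constructor
  · intro hCM
    have hdimP : ringKrullDim (↥(fiberProd πR πS)) = 1 := by
      rw [← hCM, hdepthP, hcoe1]
    have hdimR : ringKrullDim R = 1 := by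
      apply le_antisymm
      · calc ringKrullDim R ≤ ringKrullDim (↥(fiberProd πR πS)) :=
              ringKrullDim_le_of_surjective _ hsurjR
        _ = 1 := hdimP
      · exact one_le_ringKrullDim_of_regular hrRm hrRreg
    have hdimS : ringKrullDim S = 1 := by
      apply le_antisymm
      · calc ringKrullDim S ≤ ringKrullDim (↥(fiberProd πR πS)) :=
              ringKrullDim_le_of_surjective _ hsurjS
        _ = 1 := hdimP
      · exact one_le_ringKrullDim_of_regular hrSm hrSreg
    have hdepthR : rdepth R = 1 := by
      apply le_antisymm
      · apply mgrade_le_one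
        intro a b ham hbm hareg hbreg
        exact no_length_two_sequence (le_of_eq hdimR) ham hbm hareg hbreg
      · exact one_le_mgrade
          (Ideal.IsMaximal.ne_top (IsLocalRing.maximalIdeal.isMaximal _)) hrRm hrRreg
    have hdepthS : rdepth S = 1 := by
      apply le_antisymm
      · apply mgrade_le_one
        intro a b ham hbm hareg hbreg
        exact no_length_two_sequence (le_of_eq hdimS) ham hbm hareg hbreg
      · exact one_le_mgrade
          (Ideal.IsMaximal.ne_top (IsLocalRing.maximalIdeal.isMaximal _)) hrSm hrSreg
    refine ⟨?_, ?_, hdimR, hdimS, hdimP⟩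
    · rw [hdepthR, hdimR, hcoe1]
    · rw [hdepthS, hdimS, hcoe1]
  · rintro ⟨-, -, -, -, hdimP⟩
    rw [hdepthP, hdimP, hcoe1]
end
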